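/- arXiv:1711.06755 — 4 statements merged into one kernel-verified Lean document; each statement's English description precedes it below -/
import Mathlib

section
/- Let G be a locally compact group, Ω ∈ Z²_bw(G,ℂ*) with associated weight ω, and let ⊛ and ⊛_T be the twisted convolutions coming from Ω and Ω_T respectively. Then the weighted Orlicz space L^Φ_ω(G) with norm ‖f‖_{Φ,ω} = ‖fω‖_Φ is a Banach space, and the map Λ_ω : L^Φ(G) → L^Φ_ω(G), Λ_ω(f) = f/ω, is a surjective linear isometry satisfying Λ_ω(f⊛g) = Λ_ω(f)⊛_T Λ_ω(g) and Λ_ω(g⊛f) = Λ_ω(g)⊛_T Λ_ω(f) for all f ∈ L¹(G) and g ∈ L^Φ(G). If moreover (L^Φ(G),⊛,‖·‖_Φ) is a twisted Orlicz algebra, these identities hold for all f,g ∈ L^Φ(G), so that (L^Φ_ω(G),⊛_T,‖·‖_{Φ,ω}) is a Banach algebra. -/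
open MeasureTheory Filter ENNReal NNReal Pointwise Topology

noncomputable section

/-- A Young function `Φ : [0,∞) → [0,∞)` (real-valued, continuous on `[0,∞)`,
positive on `(0,∞)`): convex, `Φ 0 = 0` and `Φ x → ∞` as `x → ∞`. -/
def IsYoung (Φ : ℝ → ℝ) : Prop :=
  ConvexOn ℝ (Set.Ici 0) Φ ∧ Φ 0 = 0 ∧ Tendsto Φ atTop atTop ∧
    ContinuousOn Φ (Set.Ici 0) ∧ (∀ x : ℝ, 0 ≤ x → 0 ≤ Φ x) ∧ ∀ x : ℝ, 0 < x → 0 < Φ x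

/-- The complementary (conjugate) Young function `Ψ(y) = sup{xy - Φ(x) : x ≥ 0}`,
with values in `[0,∞]`. -/
def youngConj (Φ : ℝ → ℝ) (y : ℝ) : ℝ≥0∞ :=
  ⨆ x : Set.Ici (0 : ℝ), ENNReal.ofReal ((x : ℝ) * y - Φ x)

variable {G : Type*} [MeasurableSpace G]

/-- The Orlicz (dual) norm `‖f‖_Φ = sup{∫ |f v| : ∫ Ψ(|v|) ≤ 1}` where `Ψ` is the
complementary Young function of `Φ`; with values in `[0,∞]`. -/
def orliczNorm (μ : Measure G) (Φ : ℝ → ℝ) (f : G → ℂ) : ℝ≥0∞ :=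
  ⨆ v ∈ {v : G → ℝ | Measurable v ∧ ∫⁻ s, youngConj Φ |v s| ∂μ ≤ 1},
    ∫⁻ s, (‖f s‖₊ : ℝ≥0∞) * (‖v s‖₊ : ℝ≥0∞) ∂μ

/-- Membership in the Orlicz space `L^Φ(G)`. -/
def MemOrlicz (μ : Measure G) (Φ : ℝ → ℝ) (f : G → ℂ) : Prop :=
  AEStronglyMeasurable f μ ∧
    ∃ α : ℝ, 0 < α ∧ ∫⁻ s, ENNReal.ofReal (Φ (α * ‖f s‖)) ∂μ < ⊤

/-- Membership in `S^Φ(G)` (the closure of the step functions in `L^Φ(G)`), via the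
characterization: `f ∈ S^Φ(G)` iff `∫ Φ(α|f|) < ∞` for every `α > 0`. -/
def MemOrliczHeart (μ : Measure G) (Φ : ℝ → ℝ) (f : G → ℂ) : Prop :=
  AEStronglyMeasurable f μ ∧
    ∀ α : ℝ, 0 < α → ∫⁻ s, ENNReal.ofReal (Φ (α * ‖f s‖)) ∂μ < ⊤

/-- Membership of a real-valued function in the Orlicz space `L^Ψ(G)`, where
`Ψ = youngConj Φ` is the (possibly infinite-valued) complementary function of `Φ`. -/
def MemOrliczConj (μ : Measure G) (Φ : ℝ → ℝ) (u : G → ℝ) : Prop :=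
  Measurable u ∧ ∃ α : ℝ, 0 < α ∧ ∫⁻ s, youngConj Φ (α * |u s|) ∂μ < ⊤

/-- The Luxemburg norm `N_Ψ(u) = inf{k > 0 : ∫ Ψ(|u|/k) ≤ 1}` of a real-valued function,
`Ψ = youngConj Φ` being the complementary function of `Φ`. -/
def luxNormConj (μ : Measure G) (Φ : ℝ → ℝ) (u : G → ℝ) : ℝ≥0∞ :=
  sInf {k : ℝ≥0∞ | 0 < k ∧ k ≠ ⊤ ∧ ∫⁻ s, youngConj Φ (|u s| / k.toReal) ∂μ ≤ 1}

/-- The weighted `L¹` norm `‖f‖_{1,ω} = ∫ |f| ω`. -/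
def wL1Norm (μ : Measure G) (ω : G → ℝ) (f : G → ℂ) : ℝ≥0∞ :=
  ∫⁻ s, (‖f s‖₊ : ℝ≥0∞) * ENNReal.ofReal (ω s) ∂μ

/-- Membership in the weighted space `L¹_ω(G) = {f : fω ∈ L¹(G)}`. -/
def MemWL1 (μ : Measure G) (ω : G → ℝ) (f : G → ℂ) : Prop :=
  AEStronglyMeasurable f μ ∧ wL1Norm μ ω f < ⊤

/-- The weighted Orlicz norm `‖f‖_{Φ,ω} = ‖fω‖_Φ`. -/
def wOrliczNorm (μ : Measure G) (Φ : ℝ → ℝ) (ω : G → ℝ) (f : G → ℂ) : ℝ≥0∞ :=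
  orliczNorm μ Φ (fun s => f s * (ω s : ℂ))

/-- Membership in the weighted Orlicz space `L^Φ_ω(G) = {f : fω ∈ L^Φ(G)}`. -/
def MemWOrlicz (μ : Measure G) (Φ : ℝ → ℝ) (ω : G → ℝ) (f : G → ℂ) : Prop :=
  MemOrlicz μ Φ (fun s => f s * (ω s : ℂ))

variable [Group G]

/-- A (normalized, Borel measurable) 2-cocycle on `G` with values in `ℂ* = ℂ \ {0}`. -/
structure IsCocycle (Ω : G × G → ℂ) : Prop where
  measurable : Measurable Ω
  ne_zero : ∀ p, Ω p ≠ 0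
  cocycle : ∀ r s t : G, Ω (r, s) * Ω (r * s, t) = Ω (s, t) * Ω (r, s * t)
  one_left : ∀ r : G, Ω ((1 : G), r) = 1
  one_right : ∀ r : G, Ω (r, (1 : G)) = 1

/-- The circle part `Ω_T = Ω / |Ω|` of a `ℂ*`-valued 2-cocycle. -/
def circlePart (Ω : G × G → ℂ) : G × G → ℂ := fun p => Ω p / (‖Ω p‖ : ℂ)

/-- `Ω ∈ Z²_b(G, ℂ*)`: a normalized Borel 2-cocycle which is (essentially) bounded on
`G × G` and whose circle part `Ω_T` is continuous. -/
def IsBddCocycle [TopologicalSpace G] (μ : Measure G) (Ω : G × G → ℂ) : Prop :=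
  IsCocycle Ω ∧ MemLp Ω ⊤ (μ.prod μ) ∧ Continuous (circlePart Ω)

/-- A weight on `G`: a locally integrable measurable function `ω : G → (0,∞)` with
`ω(e) = 1` and `1/ω ∈ L^∞(G)`. -/
structure IsWeight [TopologicalSpace G] (μ : Measure G) (ω : G → ℝ) : Prop where
  measurable : Measurable ω
  pos : ∀ s, 0 < ω s
  locInt : LocallyIntegrable ω μ
  one : ω 1 = 1
  inv_bdd : MemLp (fun s => (ω s)⁻¹) ⊤ μ

/-- `|Ω|` is the 2-coboundary determined by the weight `ω`. -/
def IsCoboundaryOf (Ω : G × G → ℂ) (ω : G → ℝ) : Prop :=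
  ∀ s t : G, ‖Ω (s, t)‖ = ω (s * t) / (ω s * ω t)

/-- The twisted convolution `(f ⊛ g)(t) = ∫ f(s) g(s⁻¹t) Ω(s, s⁻¹t) ds`. -/
def twConv (μ : Measure G) (Ω : G × G → ℂ) (f g : G → ℂ) : G → ℂ :=
  fun t => ∫ s, f s * g (s⁻¹ * t) * Ω (s, s⁻¹ * t) ∂μ

/-- The twisted involution `f^*(s) = conj(f(s⁻¹)) conj(Ω_T(s, s⁻¹))` (unimodular case). -/
def twStar (ΩT : G × G → ℂ) (f : G → ℂ) : G → ℂ :=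
  fun s => (starRingEnd ℂ) (f s⁻¹) * (starRingEnd ℂ) (ΩT (s, s⁻¹))

/-- `(L^Φ(G), ⊛)` is a twisted Orlicz algebra: `⊛` maps `L^Φ × L^Φ` into `L^Φ` and the
Orlicz norm is submultiplicative up to a constant `C > 0`. -/
def IsTwistedOrliczAlgebra (μ : Measure G) (Φ : ℝ → ℝ) (Ω : G × G → ℂ) : Prop :=
  ∃ C : ℝ≥0∞, 0 < C ∧ C ≠ ⊤ ∧ ∀ f g : G → ℂ, MemOrlicz μ Φ f → MemOrlicz μ Φ g →
    MemOrlicz μ Φ (twConv μ Ω f g) ∧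
      orliczNorm μ Φ (twConv μ Ω f g) ≤ C * orliczNorm μ Φ f * orliczNorm μ Φ g

/-- Symmetry of a (possibly non-unital) Banach `*`-algebra of functions, rendered concretely:
for every `a = λ⁻¹ • (f^* ⊛ f)` with `λ ∉ [0,∞)` there is a quasi-inverse `g`
(`a + g = a ⊛ g = g ⊛ a` a.e.), i.e. `σ(f^* ⊛ f) ⊆ [0,∞)` for every `f` in the algebra. -/
def IsSymmetricFunAlg {X : Type*} [MeasurableSpace X] (ν : Measure X)
    (Mem : (X → ℂ) → Prop) (mul : (X → ℂ) → (X → ℂ) → X → ℂ)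
    (star : (X → ℂ) → X → ℂ) : Prop :=
  ∀ f : X → ℂ, Mem f → ∀ lam : ℂ, ¬(lam.im = 0 ∧ 0 ≤ lam.re) →
    ∃ g : X → ℂ, Mem g ∧
      (lam⁻¹ • mul (star f) f + g) =ᵐ[ν] mul (lam⁻¹ • mul (star f) f) g ∧
      (lam⁻¹ • mul (star f) f + g) =ᵐ[ν] mul g (lam⁻¹ • mul (star f) f)

/-- The word-length function associated to a generating set `U` of `G`. -/
def lengthFn (U : Set G) (x : G) : ℝ := (sInf {n : ℕ | x ∈ U ^ n} : ℕ)

/-- `U` is a compact symmetric generating neighbourhood of the identity witnessing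
polynomial growth of order (at most) `d`, with constant `C`. -/
structure IsPolyGrowthGen [TopologicalSpace G] (μ : Measure G) (U : Set G)
    (C : ℝ) (d : ℕ) : Prop where
  compact : IsCompact U
  nhd : U ∈ 𝓝 (1 : G)
  symm : U⁻¹ = U
  generates : (⋃ n : ℕ, U ^ (n + 1)) = Set.univ
  growth : ∀ n : ℕ, μ (U ^ (n + 1)) ≤ ENNReal.ofReal (C * (n + 1 : ℕ) ^ d)



end
noncomputable section

open MeasureTheory Filter ENNReal NNReal Topology

/-- `Λ_ω f = f/ω`. -/
def LamW {G : Type*} (ω : G → ℝ) (f : G → ℂ) : G → ℂ := fun s => f s / (ω s : ℂ)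

namespace WOT
open MeasureTheory Filter ENNReal NNReal Topology

variable {G : Type*} [MeasurableSpace G] {μ : Measure G} {Φ : ℝ → ℝ}

/-- slope inequality from convexity -/
lemma phi_slope (hΦ : IsYoung Φ) {t x : ℝ} (ht : 0 ≤ t) (htx : t ≤ x) (hx : 0 < x) :
    Φ t ≤ t / x * Φ x := by
  have hb : 0 ≤ t / x := by positivity
  have ha : 0 ≤ 1 - t / x := by
    have : t / x ≤ 1 := (div_le_one hx).mpr htx
    linarith
  have hab : (1 - t / x) + t / x = 1 := by ring
  have h := hΦ.1.2 (Set.mem_Ici.mpr (le_refl (0:ℝ))) (Set.mem_Ici.mpr hx.le) ha hb hab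
  have hpt : (1 - t / x) • (0:ℝ) + (t / x) • x = t := by
    rw [smul_zero, zero_add, smul_eq_mul, div_mul_cancel₀ t hx.ne']
  rw [hpt] at h
  simpa [hΦ.2.1, smul_eq_mul] using h

lemma phi_nonneg (hΦ : IsYoung Φ) {x : ℝ} (hx : 0 ≤ x) : 0 ≤ Φ x := hΦ.2.2.2.2.1 x hx

lemma phi_mono (hΦ : IsYoung Φ) {x y : ℝ} (hx : 0 ≤ x) (hxy : x ≤ y) : Φ x ≤ Φ y := by
  rcases (hx.trans hxy).eq_or_lt with h | hy
  · have hx0 : x = 0 := le_antisymm (h ▸ hxy) hx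
    have hy0 : y = 0 := h.symm
    simp [hx0, hy0]
  · calc Φ x ≤ x / y * Φ y := phi_slope hΦ hx hxy hy
    _ ≤ 1 * Φ y := by
        apply mul_le_mul_of_nonneg_right _ (phi_nonneg hΦ (hx.trans hxy))
        exact (div_le_one hy).mpr hxy
    _ = Φ y := one_mul _

lemma youngConj_le (hΦ : IsYoung Φ) {y c : ℝ} (hc : 0 ≤ c)
    (h : ∀ t : ℝ, 0 ≤ t → t * y - Φ t ≤ c) : youngConj Φ y ≤ ENNReal.ofReal c := by
  refine iSup_le fun x => ?_
  exact ENNReal.ofReal_le_ofReal (h x x.2)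

lemma youngConj_zero (hΦ : IsYoung Φ) : youngConj Φ 0 = 0 := by
  refine le_antisymm ?_ zero_le
  simpa using youngConj_le hΦ le_rfl (fun t ht => by
    have := phi_nonneg hΦ ht; linarith)

lemma youngConj_ratio (hΦ : IsYoung Φ) {x : ℝ} (hx : 0 < x) :
    youngConj Φ (Φ x / x) ≤ ENNReal.ofReal (Φ x) := by
  refine youngConj_le hΦ (phi_nonneg hΦ hx.le) (fun t ht => ?_)
  rcases le_or_gt t x with htx | hxt
  · have hΦt := phi_nonneg hΦ ht
    have h1 : t * (Φ x / x) ≤ Φ x := by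
      have he : t * (Φ x / x) = t / x * Φ x := by ring
      rw [he]
      calc t / x * Φ x ≤ 1 * Φ x :=
            mul_le_mul_of_nonneg_right ((div_le_one hx).mpr htx) (phi_nonneg hΦ hx.le)
        _ = Φ x := one_mul _
    linarith
  · have htpos : 0 < t := hx.trans hxt
    have hs : Φ x ≤ x / t * Φ t := phi_slope hΦ hx.le hxt.le htpos
    have h2 : t / x * Φ x ≤ Φ t := by
      have hmul := mul_le_mul_of_nonneg_left hs (by positivity : (0:ℝ) ≤ t / x)
      have he : t / x * (x / t * Φ t) = Φ t := by field_simp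
      linarith
    have he2 : t * (Φ x / x) = t / x * Φ x := by ring
    have := phi_nonneg hΦ hx.le
    linarith [he2 ▸ h2]

lemma youngConj_div (hΦ : IsYoung Φ) {c : ℝ} (hc : 1 ≤ c) (y : ℝ) :
    youngConj Φ (y / c) ≤ youngConj Φ y / ENNReal.ofReal c := by
  have hc0 : 0 < c := lt_of_lt_of_le one_pos hc
  refine iSup_le fun x => ?_
  have hΦx := phi_nonneg hΦ x.2
  have h1 : (x : ℝ) * (y / c) - Φ x ≤ ((x : ℝ) * y - Φ x) / c := by
    rw [le_div_iff₀ hc0]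
    have h2 : Φ (x:ℝ) ≤ c * Φ (x:ℝ) := le_mul_of_one_le_left hΦx hc
    have h3 : ((x:ℝ) * (y / c) - Φ (x:ℝ)) * c = (x:ℝ) * y - c * Φ (x:ℝ) := by
      field_simp
    linarith
  calc ENNReal.ofReal ((x : ℝ) * (y / c) - Φ x)
      ≤ ENNReal.ofReal (((x : ℝ) * y - Φ x) / c) := ENNReal.ofReal_le_ofReal h1
    _ = ENNReal.ofReal ((x : ℝ) * y - Φ x) / ENNReal.ofReal c := ENNReal.ofReal_div_of_pos hc0
    _ ≤ youngConj Φ y / ENNReal.ofReal c := by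
        gcongr
        exact le_iSup (fun x : Set.Ici (0:ℝ) => ENNReal.ofReal ((x : ℝ) * y - Φ x)) x

/-- the admissible-test-function pairing is at most the Orlicz norm -/
lemma pairing_le (μ : Measure G) (Φ : ℝ → ℝ) (f : G → ℂ) {v : G → ℝ}
    (hv : Measurable v) (hint : ∫⁻ s, youngConj Φ |v s| ∂μ ≤ 1) :
    ∫⁻ s, (‖f s‖₊ : ℝ≥0∞) * (‖v s‖₊ : ℝ≥0∞) ∂μ ≤ orliczNorm μ Φ f := by
  exact le_iSup₂ (f := fun (v : G → ℝ) (_ : v ∈ {v : G → ℝ | Measurable v ∧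
    ∫⁻ s, youngConj Φ |v s| ∂μ ≤ 1}) => ∫⁻ s, (‖f s‖₊ : ℝ≥0∞) * (‖v s‖₊ : ℝ≥0∞) ∂μ)
    v ⟨hv, hint⟩

lemma orliczNorm_le (μ : Measure G) (Φ : ℝ → ℝ) (f : G → ℂ) {B : ℝ≥0∞}
    (h : ∀ v : G → ℝ, Measurable v → ∫⁻ s, youngConj Φ |v s| ∂μ ≤ 1 →
      ∫⁻ s, (‖f s‖₊ : ℝ≥0∞) * (‖v s‖₊ : ℝ≥0∞) ∂μ ≤ B) :
    orliczNorm μ Φ f ≤ B :=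
  iSup₂_le fun v hv => h v hv.1 hv.2

lemma orliczNorm_congr {f g : G → ℂ} (h : f =ᵐ[μ] g) :
    orliczNorm μ Φ f = orliczNorm μ Φ g := by
  unfold orliczNorm
  refine iSup_congr fun v => iSup_congr fun hv => lintegral_congr_ae ?_
  filter_upwards [h] with s hs
  rw [hs]

lemma orliczNorm_mono {f g : G → ℂ} (h : ∀ᵐ s ∂μ, ‖f s‖ ≤ ‖g s‖) :
    orliczNorm μ Φ f ≤ orliczNorm μ Φ g := by
  refine orliczNorm_le μ Φ f fun v hv hint => ?_
  refine le_trans (lintegral_mono_ae ?_) (pairing_le μ Φ g hv hint)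
  filter_upwards [h] with s hs
  gcongr
  exact hs

lemma orliczNorm_neg (f g : G → ℂ) :
    orliczNorm μ Φ (fun s => f s - g s) = orliczNorm μ Φ (fun s => g s - f s) := by
  apply le_antisymm <;>
  · apply orliczNorm_mono
    filter_upwards with s
    rw [norm_sub_rev]

lemma orliczNorm_add (f g : G → ℂ) (hf : AEMeasurable f μ) :
    orliczNorm μ Φ (fun s => f s + g s) ≤ orliczNorm μ Φ f + orliczNorm μ Φ g := by
  refine orliczNorm_le μ Φ _ fun v hv hint => ?_
  have h1 : ∫⁻ s, (‖f s + g s‖₊ : ℝ≥0∞) * (‖v s‖₊ : ℝ≥0∞) ∂μ ≤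
      ∫⁻ s, ((‖f s‖₊ : ℝ≥0∞) * (‖v s‖₊ : ℝ≥0∞) + (‖g s‖₊ : ℝ≥0∞) * (‖v s‖₊ : ℝ≥0∞)) ∂μ := by
    refine lintegral_mono fun s => ?_
    rw [← add_mul]
    have hle : (‖f s + g s‖₊ : ℝ≥0∞) ≤ (‖f s‖₊ : ℝ≥0∞) + (‖g s‖₊ : ℝ≥0∞) := by
      exact_mod_cast nnnorm_add_le (f s) (g s)
    exact mul_le_mul_left hle _
  have h2 : ∫⁻ s, ((‖f s‖₊ : ℝ≥0∞) * (‖v s‖₊ : ℝ≥0∞) + (‖g s‖₊ : ℝ≥0∞) * (‖v s‖₊ : ℝ≥0∞)) ∂μ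
      = ∫⁻ s, (‖f s‖₊ : ℝ≥0∞) * (‖v s‖₊ : ℝ≥0∞) ∂μ +
        ∫⁻ s, (‖g s‖₊ : ℝ≥0∞) * (‖v s‖₊ : ℝ≥0∞) ∂μ :=
    lintegral_add_left' (hf.enorm.mul hv.enorm.aemeasurable) _
  exact h1.trans (h2.le.trans (add_le_add (pairing_le μ Φ f hv hint) (pairing_le μ Φ g hv hint)))

lemma orliczNorm_smul (f : G → ℂ) {c : ℝ} (hc : 0 ≤ c) :
    orliczNorm μ Φ (fun s => (c : ℂ) * f s) ≤ ENNReal.ofReal c * orliczNorm μ Φ f := by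
  refine orliczNorm_le μ Φ _ fun v hv hint => ?_
  have h1 : ∀ s, (‖(c : ℂ) * f s‖₊ : ℝ≥0∞) * (‖v s‖₊ : ℝ≥0∞) =
      ENNReal.ofReal c * ((‖f s‖₊ : ℝ≥0∞) * (‖v s‖₊ : ℝ≥0∞)) := by
    intro s
    rw [← mul_assoc]
    congr 1
    rw [← Real.enorm_eq_ofReal hc, enorm_eq_nnnorm, ← ENNReal.coe_mul]
    norm_cast
    simp [nnnorm_mul]
  simp_rw [h1]
  rw [lintegral_const_mul' _ _ ENNReal.ofReal_ne_top]
  exact mul_le_mul_right (pairing_le μ Φ f hv hint) _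

section Key

variable (hΦ : IsYoung Φ)

/-- continuous extension of `Φ` -/
def phi' (Φ : ℝ → ℝ) : ℝ → ℝ := fun x => Φ (max x 0)

lemma phi'_cont (hΦ : IsYoung Φ) : Continuous (phi' Φ) := by
  apply hΦ.2.2.2.1.comp_continuous (continuous_id.max continuous_const)
  intro x
  exact Set.mem_Ici.mpr (le_max_right _ _)

lemma phi'_eq (hΦ : IsYoung Φ) {x : ℝ} (hx : 0 ≤ x) : phi' Φ x = Φ x := by
  unfold phi'
  rw [max_eq_left hx]

/-- **Key modular estimate**: a σ-finitely supported measurable function with Orlicz norm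
less than one has modular at most one. -/
lemma modular_le_one (hΦ : IsYoung Φ) {w : G → ℂ} (hw : Measurable w)
    (E : ℕ → Set G) (hEm : ∀ j, MeasurableSet (E j)) (hEmono : Monotone E)
    (hEfin : ∀ j, μ (E j) < ⊤) (hsupp : ∀ s, w s ≠ 0 → s ∈ ⋃ j, E j)
    (hN : orliczNorm μ Φ w < 1) :
    ∫⁻ s, ENNReal.ofReal (Φ ‖w s‖) ∂μ ≤ 1 := by
  classical
  set u : ℕ → G → ℝ := fun j => (E j).indicator (fun s => min ‖w s‖ (j : ℝ)) with hu
  have hu_meas : ∀ j, Measurable (u j) :=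
    fun j => (hw.norm.min measurable_const).indicator (hEm j)
  have hu_nonneg : ∀ j s, 0 ≤ u j s := by
    intro j s
    apply Set.indicator_nonneg
    intro s _
    exact le_min (norm_nonneg _) (Nat.cast_nonneg _)
  have hu_le_norm : ∀ j s, u j s ≤ ‖w s‖ := by
    intro j s
    rcases Set.indicator_eq_zero_or_self (E j) (fun s => min ‖w s‖ (j:ℝ)) s with h | h <;>
      rw [hu] <;> simp only [h]
    · exact norm_nonneg _
    · exact min_le_left _ _
  have hu_le_j : ∀ j s, u j s ≤ (j : ℝ) := by
    intro j s
    rcases Set.indicator_eq_zero_or_self (E j) (fun s => min ‖w s‖ (j:ℝ)) s with h | h <;>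
      rw [hu] <;> simp only [h]
    · exact Nat.cast_nonneg _
    · exact min_le_right _ _
  -- Step 1: each truncation has modular at most 1
  have step1 : ∀ j, ∫⁻ s, ENNReal.ofReal (Φ (u j s)) ∂μ ≤ 1 := by
    intro j
    by_contra hgt'
    push_neg at hgt'
    set I := ∫⁻ s, ENNReal.ofReal (Φ (u j s)) ∂μ with hI
    have hIfin : I ≠ ⊤ := by
      have hb : ∀ s, ENNReal.ofReal (Φ (u j s)) ≤
          (E j).indicator (fun _ => ENNReal.ofReal (Φ (j : ℝ))) s := by
        intro s
        rcases Classical.em (s ∈ E j) with hs | hs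
        · rw [Set.indicator_of_mem hs]
          exact ENNReal.ofReal_le_ofReal (phi_mono hΦ (hu_nonneg j s) (hu_le_j j s))
        · rw [Set.indicator_of_notMem hs]
          have : u j s = 0 := Set.indicator_of_notMem hs _
          rw [this, hΦ.2.1]
          simp
      refine ne_top_of_le_ne_top ?_ (lintegral_mono hb)
      rw [lintegral_indicator_const (hEm j)]
      exact ENNReal.mul_ne_top ENNReal.ofReal_ne_top (hEfin j).ne
    have hI1 : 1 < I := hgt'
    have hItoReal : 1 ≤ I.toReal := by
      have := (ENNReal.toReal_lt_toReal (by simp) hIfin).mpr hI1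
      simpa using this.le
    have hIpos : I ≠ 0 := by
      intro h0
      rw [h0] at hI1
      exact (not_lt.mpr zero_le) hI1
    set c := I.toReal with hc
    have hc0 : 0 < c := lt_of_lt_of_le one_pos hItoReal
    set v : G → ℝ := fun s => phi' Φ (u j s) / u j s / c with hv
    have hv_meas : Measurable v :=
      (((phi'_cont hΦ).measurable.comp (hu_meas j)).div (hu_meas j)).div_const c
    have hv_nonneg : ∀ s, 0 ≤ v s := by
      intro s
      apply div_nonneg (div_nonneg _ (hu_nonneg j s)) hc0.le
      rw [phi'_eq hΦ (hu_nonneg j s)]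
      exact phi_nonneg hΦ (hu_nonneg j s)
    -- admissibility
    have hv_adm : ∫⁻ s, youngConj Φ |v s| ∂μ ≤ 1 := by
      have hpt : ∀ s, youngConj Φ |v s| ≤ ENNReal.ofReal (Φ (u j s)) * I⁻¹ := by
        intro s
        rw [abs_of_nonneg (hv_nonneg s)]
        rcases eq_or_lt_of_le (hu_nonneg j s) with h0 | hpos
        · have hv0 : v s = 0 := by
            simp only [hv]
            beta_reduce
            rw [← h0]
            simp [phi'_eq hΦ (le_refl (0:ℝ)), hΦ.2.1]
          rw [hv0, youngConj_zero hΦ]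
          exact zero_le
        · have hveq : v s = Φ (u j s) / u j s / c := by
            simp only [hv]
            beta_reduce
            rw [phi'_eq hΦ (hu_nonneg j s)]
          rw [hveq]
          calc youngConj Φ (Φ (u j s) / u j s / c)
              ≤ youngConj Φ (Φ (u j s) / u j s) / ENNReal.ofReal c :=
                youngConj_div hΦ hItoReal _
            _ ≤ ENNReal.ofReal (Φ (u j s)) / ENNReal.ofReal c := by
                gcongr
                exact youngConj_ratio hΦ hpos
            _ = ENNReal.ofReal (Φ (u j s)) * I⁻¹ := by
                rw [hc, ENNReal.ofReal_toReal hIfin, div_eq_mul_inv]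
      calc ∫⁻ s, youngConj Φ |v s| ∂μ ≤ ∫⁻ s, ENNReal.ofReal (Φ (u j s)) * I⁻¹ ∂μ :=
            lintegral_mono hpt
        _ = I * I⁻¹ := by rw [lintegral_mul_const' _ _ (by simp [hIpos])]
        _ = 1 := ENNReal.mul_inv_cancel hIpos hIfin
    -- payoff
    have hpay : (1 : ℝ≥0∞) ≤ ∫⁻ s, (‖w s‖₊ : ℝ≥0∞) * (‖v s‖₊ : ℝ≥0∞) ∂μ := by
      have hpt : ∀ s, ENNReal.ofReal (Φ (u j s)) * I⁻¹ ≤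
          (‖w s‖₊ : ℝ≥0∞) * (‖v s‖₊ : ℝ≥0∞) := by
        intro s
        rcases eq_or_lt_of_le (hu_nonneg j s) with h0 | hpos
        · rw [← h0, hΦ.2.1]
          simp
        · have hveq : v s = Φ (u j s) / u j s / c := by
            simp only [hv]
            beta_reduce
            rw [phi'_eq hΦ (hu_nonneg j s)]
          have h1 : (‖v s‖₊ : ℝ≥0∞) = ENNReal.ofReal (v s) :=
            Real.enorm_eq_ofReal (hv_nonneg s)
          have h2 : ENNReal.ofReal (u j s) ≤ (‖w s‖₊ : ℝ≥0∞) := by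
            rw [← enorm_eq_nnnorm, ← ofReal_norm]
            exact ENNReal.ofReal_le_ofReal (hu_le_norm j s)
          calc ENNReal.ofReal (Φ (u j s)) * I⁻¹
              = ENNReal.ofReal (u j s) * ENNReal.ofReal (v s) := by
                rw [hveq, ← ENNReal.ofReal_mul (hu_nonneg j s)]
                have hx : u j s * (Φ (u j s) / u j s / c) = Φ (u j s) / c := by
                  field_simp
                rw [hx, ENNReal.ofReal_div_of_pos hc0, hc, ENNReal.ofReal_toReal hIfin,
                  div_eq_mul_inv]
            _ ≤ (‖w s‖₊ : ℝ≥0∞) * (‖v s‖₊ : ℝ≥0∞) := by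
                rw [h1]
                exact mul_le_mul_left h2 _
      calc (1:ℝ≥0∞) = I * I⁻¹ := (ENNReal.mul_inv_cancel hIpos hIfin).symm
        _ = ∫⁻ s, ENNReal.ofReal (Φ (u j s)) * I⁻¹ ∂μ := by
            rw [lintegral_mul_const' _ _ (by simp [hIpos])]
        _ ≤ _ := lintegral_mono hpt
    have : (1:ℝ≥0∞) ≤ orliczNorm μ Φ w := hpay.trans (pairing_le μ Φ w hv_meas hv_adm)
    exact (not_lt.mpr this) hN
  -- Step 2: monotone convergence
  have hmono : Monotone (fun j => fun s => ENNReal.ofReal (Φ (u j s))) := by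
    intro j k hjk s
    apply ENNReal.ofReal_le_ofReal
    apply phi_mono hΦ (hu_nonneg j s)
    rcases Classical.em (s ∈ E j) with hs | hs
    · have hsk : s ∈ E k := hEmono hjk hs
      simp only [hu, Set.indicator_of_mem hs, Set.indicator_of_mem hsk]
      exact min_le_min le_rfl (Nat.cast_le.mpr hjk)
    · have h0 : u j s = 0 := Set.indicator_of_notMem hs _
      rw [h0]
      exact hu_nonneg k s
  have hptwise : ∀ s, ENNReal.ofReal (Φ ‖w s‖) = ⨆ j, ENNReal.ofReal (Φ (u j s)) := by
    intro s
    refine le_antisymm ?_ (iSup_le fun j => ENNReal.ofReal_le_ofReal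
      (phi_mono hΦ (hu_nonneg j s) (hu_le_norm j s)))
    rcases Classical.em (w s = 0) with h0 | h0
    · have h1 : u 0 s = ‖w s‖ := by
        simp [hu, h0, Set.indicator_apply]
      have h2 : ENNReal.ofReal (Φ ‖w s‖) = ENNReal.ofReal (Φ (u 0 s)) := by rw [h1]
      rw [h2]
      exact le_iSup (fun j => ENNReal.ofReal (Φ (u j s))) 0
    · obtain ⟨j₀, hj₀⟩ := Set.mem_iUnion.mp (hsupp s h0)
      set j := max j₀ ⌈‖w s‖⌉₊ with hjdef
      have hsj : s ∈ E j := hEmono (le_max_left _ _) hj₀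
      have hj : ‖w s‖ ≤ (j:ℝ) := (Nat.le_ceil _).trans (Nat.cast_le.mpr (le_max_right _ _))
      have h1 : u j s = ‖w s‖ := by
        simp only [hu, Set.indicator_of_mem hsj]
        exact min_eq_left hj
      have h2 : ENNReal.ofReal (Φ ‖w s‖) = ENNReal.ofReal (Φ (u j s)) := by rw [h1]
      rw [h2]
      exact le_iSup (fun j => ENNReal.ofReal (Φ (u j s))) j
  have hmeasj : ∀ j, Measurable (fun s => ENNReal.ofReal (Φ (u j s))) := by
    intro j
    have heq : (fun s => ENNReal.ofReal (Φ (u j s))) =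
        fun s => ENNReal.ofReal (phi' Φ (u j s)) :=
      funext fun s => by rw [phi'_eq hΦ (hu_nonneg j s)]
    rw [heq]
    exact ENNReal.measurable_ofReal.comp ((phi'_cont hΦ).measurable.comp (hu_meas j))
  calc ∫⁻ s, ENNReal.ofReal (Φ ‖w s‖) ∂μ
      = ∫⁻ s, ⨆ j, ENNReal.ofReal (Φ (u j s)) ∂μ := lintegral_congr fun s => hptwise s
    _ = ⨆ j, ∫⁻ s, ENNReal.ofReal (Φ (u j s)) ∂μ := lintegral_iSup hmeasj hmono
    _ ≤ 1 := iSup_le step1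

end Key

lemma memOrlicz_congr {f g : G → ℂ} (h : f =ᵐ[μ] g) (hf : MemOrlicz μ Φ f) :
    MemOrlicz μ Φ g := by
  obtain ⟨hm, α, hα, hint⟩ := hf
  refine ⟨hm.congr h, α, hα, ?_⟩
  have : ∫⁻ s, ENNReal.ofReal (Φ (α * ‖g s‖)) ∂μ
      = ∫⁻ s, ENNReal.ofReal (Φ (α * ‖f s‖)) ∂μ := by
    refine lintegral_congr_ae ?_
    filter_upwards [h] with s hs
    rw [hs]
  rw [this]
  exact hint

lemma memOrlicz_add (hΦ : IsYoung Φ) {f g : G → ℂ} (hf : MemOrlicz μ Φ f)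
    (hg : MemOrlicz μ Φ g) : MemOrlicz μ Φ (fun s => f s + g s) := by
  obtain ⟨hfm, α₁, hα₁, hint₁⟩ := hf
  obtain ⟨hgm, α₂, hα₂, hint₂⟩ := hg
  refine ⟨hfm.add hgm, min α₁ α₂ / 2, by positivity, ?_⟩
  set α := min α₁ α₂ / 2 with hα
  have hαpos : 0 < α := by positivity
  have hpt : ∀ s, Φ (α * ‖f s + g s‖) ≤ Φ (α₁ * ‖f s‖) + Φ (α₂ * ‖g s‖) := by
    intro s
    have h1 : Φ (α * ‖f s + g s‖) ≤ Φ (α * (‖f s‖ + ‖g s‖)) := by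
      apply phi_mono hΦ (by positivity)
      exact mul_le_mul_of_nonneg_left (norm_add_le _ _) hαpos.le
    have h2 : Φ (α * (‖f s‖ + ‖g s‖)) ≤
        (1/2 : ℝ) * Φ (2 * α * ‖f s‖) + (1/2 : ℝ) * Φ (2 * α * ‖g s‖) := by
      have hc := hΦ.1.2 (Set.mem_Ici.mpr (by positivity : (0:ℝ) ≤ 2 * α * ‖f s‖))
        (Set.mem_Ici.mpr (by positivity : (0:ℝ) ≤ 2 * α * ‖g s‖))
        (by norm_num : (0:ℝ) ≤ 1/2) (by norm_num : (0:ℝ) ≤ 1/2) (by norm_num)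
      have he : (1/2 : ℝ) • (2 * α * ‖f s‖) + (1/2 : ℝ) • (2 * α * ‖g s‖)
          = α * (‖f s‖ + ‖g s‖) := by
        simp only [smul_eq_mul]
        ring
      rw [he] at hc
      simpa [smul_eq_mul] using hc
    have h3 : Φ (2 * α * ‖f s‖) ≤ Φ (α₁ * ‖f s‖) := by
      apply phi_mono hΦ (by positivity)
      have : 2 * α ≤ α₁ := by
        rw [hα]
        have := min_le_left α₁ α₂
        linarith
      exact mul_le_mul_of_nonneg_right this (norm_nonneg _)
    have h4 : Φ (2 * α * ‖g s‖) ≤ Φ (α₂ * ‖g s‖) := by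
      apply phi_mono hΦ (by positivity)
      have : 2 * α ≤ α₂ := by
        rw [hα]
        have := min_le_right α₁ α₂
        linarith
      exact mul_le_mul_of_nonneg_right this (norm_nonneg _)
    have h5 : 0 ≤ Φ (α₁ * ‖f s‖) := phi_nonneg hΦ (by positivity)
    have h6 : 0 ≤ Φ (α₂ * ‖g s‖) := phi_nonneg hΦ (by positivity)
    linarith
  calc ∫⁻ s, ENNReal.ofReal (Φ (α * ‖f s + g s‖)) ∂μ
      ≤ ∫⁻ s, (ENNReal.ofReal (Φ (α₁ * ‖f s‖)) + ENNReal.ofReal (Φ (α₂ * ‖g s‖))) ∂μ := by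
        refine lintegral_mono fun s => ?_
        exact (ENNReal.ofReal_le_ofReal (hpt s)).trans ENNReal.ofReal_add_le
    _ = ∫⁻ s, ENNReal.ofReal (Φ (α₁ * ‖f s‖)) ∂μ
        + ∫⁻ s, ENNReal.ofReal (Φ (α₂ * ‖g s‖)) ∂μ := by
        refine lintegral_add_left' ?_ _
        exact ENNReal.measurable_ofReal.comp_aemeasurable
          (((phi'_cont hΦ).measurable.comp_aemeasurable
            (hfm.norm.aemeasurable.const_mul α₁)).congr
            (Filter.Eventually.of_forall fun s => phi'_eq hΦ (by positivity)))
    _ < ⊤ := ENNReal.add_lt_top.mpr ⟨hint₁, hint₂⟩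

lemma memOrlicz_levelset (hΦ : IsYoung Φ) {f f' : G → ℂ} (hf : MemOrlicz μ Φ f)
    (hf' : f' =ᵐ[μ] f) (hm : Measurable f') {c : ℝ} (hc : 0 < c) :
    μ {s | c ≤ ‖f' s‖} < ⊤ := by
  obtain ⟨_, α, hα, hint⟩ := hf
  have hmeas : Measurable (fun s => ENNReal.ofReal (Φ (α * ‖f' s‖))) := by
    have heq : (fun s => ENNReal.ofReal (Φ (α * ‖f' s‖))) =
        fun s => ENNReal.ofReal (phi' Φ (α * ‖f' s‖)) :=
      funext fun s => by rw [phi'_eq hΦ (by positivity)]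
    rw [heq]
    exact ENNReal.measurable_ofReal.comp
      ((phi'_cont hΦ).measurable.comp (hm.norm.const_mul α))
  have hint' : ∫⁻ s, ENNReal.ofReal (Φ (α * ‖f' s‖)) ∂μ < ⊤ := by
    have : ∫⁻ s, ENNReal.ofReal (Φ (α * ‖f' s‖)) ∂μ
        = ∫⁻ s, ENNReal.ofReal (Φ (α * ‖f s‖)) ∂μ := by
      refine lintegral_congr_ae ?_
      filter_upwards [hf'] with s hs
      rw [hs]
    rw [this]
    exact hint
  have hΦc : 0 < Φ (α * c) := hΦ.2.2.2.2.2 _ (by positivity)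
  have hsub : {s | c ≤ ‖f' s‖} ⊆
      {s | ENNReal.ofReal (Φ (α * c)) ≤ ENNReal.ofReal (Φ (α * ‖f' s‖))} := by
    intro s hs
    exact ENNReal.ofReal_le_ofReal
      (phi_mono hΦ (by positivity) (mul_le_mul_of_nonneg_left hs hα.le))
  calc μ {s | c ≤ ‖f' s‖} ≤ μ _ := measure_mono hsub
    _ ≤ (∫⁻ s, ENNReal.ofReal (Φ (α * ‖f' s‖)) ∂μ) / ENNReal.ofReal (Φ (α * c)) :=
        meas_ge_le_lintegral_div hmeas.aemeasurable
          (by simp [hΦc]) ENNReal.ofReal_ne_top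
    _ < ⊤ := ENNReal.div_lt_top hint'.ne (by simp [hΦc])

lemma orlicz_complete (hΦ : IsYoung Φ) (H : ℕ → G → ℂ) (hmem : ∀ n, MemOrlicz μ Φ (H n))
    (hcau : ∀ ε : ℝ≥0∞, 0 < ε → ∃ N : ℕ, ∀ m ≥ N, ∀ n ≥ N,
      orliczNorm μ Φ (fun s => H m s - H n s) < ε) :
    ∃ g : G → ℂ, MemOrlicz μ Φ g ∧
      Tendsto (fun n => orliczNorm μ Φ (fun s => H n s - g s)) atTop (𝓝 0) := by
  classical
  -- measurable representatives
  set H' : ℕ → G → ℂ := fun n => (hmem n).1.mk (H n) with hH'def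
  have hH'm : ∀ n, Measurable (H' n) := fun n => (hmem n).1.stronglyMeasurable_mk.measurable
  have hH'ae : ∀ n, H' n =ᵐ[μ] H n := fun n => ((hmem n).1.ae_eq_mk).symm
  -- σ-finite exhaustion of the joint support
  set A : ℕ → ℕ → Set G := fun n k => {s | 1 / ((k : ℝ) + 1) ≤ ‖H' n s‖} with hAdef
  have hA_fin : ∀ n k, μ (A n k) < ⊤ := fun n k =>
    memOrlicz_levelset hΦ (hmem n) (hH'ae n) (hH'm n) (by positivity)
  have hA_meas : ∀ n k, MeasurableSet (A n k) := fun n k =>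
    measurableSet_le measurable_const (hH'm n).norm
  set E : ℕ → Set G := fun j =>
    ⋃ i ∈ Finset.range (j + 1), A (Denumerable.ofNat (ℕ × ℕ) i).1
      (Denumerable.ofNat (ℕ × ℕ) i).2 with hEdef
  have hE_meas : ∀ j, MeasurableSet (E j) := fun j =>
    MeasurableSet.biUnion (Finset.range (j+1)).countable_toSet (fun i _ => hA_meas _ _)
  have hE_mono : Monotone E := by
    intro j j' hj
    apply Set.biUnion_subset_biUnion_left
    intro i hi
    have h1 : i < j + 1 := Finset.mem_range.mp hi
    exact Finset.mem_range.mpr (by omega)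
  have hE_fin : ∀ j, μ (E j) < ⊤ := by
    intro j
    refine lt_of_le_of_lt (measure_biUnion_finset_le _ _) ?_
    exact ENNReal.sum_lt_top.mpr fun i _ => hA_fin _ _
  have hcover : ∀ s n, H' n s ≠ 0 → s ∈ ⋃ j, E j := by
    intro s n hns
    have hpos : 0 < ‖H' n s‖ := norm_pos_iff.mpr hns
    obtain ⟨k, hk⟩ := exists_nat_gt (1 / ‖H' n s‖)
    have hmem_A : s ∈ A n k := by
      have h1 : 1 < ‖H' n s‖ * ((k:ℝ) + 1) := by
        have h2 : 1 < ‖H' n s‖ * k := by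
          rw [div_lt_iff₀ hpos] at hk
          linarith [hk]
        nlinarith [hpos]
      show 1 / ((k : ℝ) + 1) ≤ ‖H' n s‖
      rw [div_le_iff₀ (by positivity)]
      linarith
    have : s ∈ E (Encodable.encode (n, k)) := by
      refine Set.mem_iUnion.mpr ⟨Encodable.encode (n, k),
        Set.mem_iUnion.mpr ⟨Finset.self_mem_range_succ _, ?_⟩⟩
      rw [Denumerable.ofNat_encode]
      exact hmem_A
    exact Set.mem_iUnion.mpr ⟨_, this⟩
  -- rapidly Cauchy subsequence
  set r : ℝ≥0∞ := 2⁻¹ with hrdef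
  have hrlt : r < 1 := by
    rw [hrdef]
    simp [ENNReal.inv_lt_one]
  have hrpow : ∀ k : ℕ, 0 < r ^ k := fun k =>
    ENNReal.pow_pos (by rw [hrdef]; simp) k
  have hsel : ∀ k : ℕ, ∃ N : ℕ, ∀ m ≥ N, ∀ n ≥ N,
      orliczNorm μ Φ (fun s => H m s - H n s) < r ^ k := fun k => hcau (r ^ k) (hrpow k)
  set φ : ℕ → ℕ := fun k => (hsel k).choose with hφdef
  set m : ℕ → ℕ := fun k => Nat.rec (φ 0) (fun k mk => max (mk + 1) (φ (k + 1))) k with hmdef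
  have hm_succ : ∀ k, m (k + 1) = max (m k + 1) (φ (k + 1)) := fun k => rfl
  have hm_lt : ∀ k, m k < m (k + 1) := by
    intro k
    rw [hm_succ]
    exact lt_of_lt_of_le (Nat.lt_succ_self _) (le_max_left _ _)
  have hm_mono : Monotone m := monotone_nat_of_le_succ fun k => (hm_lt k).le
  have hm_ge_φ : ∀ k, φ k ≤ m k := by
    intro k
    cases k with
    | zero => exact le_rfl
    | succ k => rw [hm_succ]; exact le_max_right _ _
  have hm_ge_k : ∀ k, k ≤ m k := by
    intro k
    induction k with
    | zero => exact Nat.zero_le _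
    | succ k ih => exact lt_of_le_of_lt ih (hm_lt k)
  -- differences
  set D : ℕ → G → ℂ := fun k s => H' (m (k + 1)) s - H' (m k) s with hDdef
  have hD_meas : ∀ k, Measurable (D k) := fun k => (hH'm _).sub (hH'm _)
  have hD_norm : ∀ k, orliczNorm μ Φ (D k) ≤ r ^ k := by
    intro k
    have h1 : orliczNorm μ Φ (D k)
        = orliczNorm μ Φ (fun s => H (m (k + 1)) s - H (m k) s) := by
      apply orliczNorm_congr
      filter_upwards [hH'ae (m (k + 1)), hH'ae (m k)] with s h1 h2
      show H' (m (k+1)) s - H' (m k) s = _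
      rw [h1, h2]
    rw [h1]
    exact ((hsel k).choose_spec (m (k + 1)) ((hm_ge_φ k).trans (hm_lt k).le)
      (m k) (hm_ge_φ k)).le
  -- tails
  set Tail : ℕ → G → ℝ≥0∞ := fun k s => ∑' i, (‖D (i + k) s‖₊ : ℝ≥0∞) with hTaildef
  have hTail_int : ∀ k (v : G → ℝ), Measurable v →
      (∫⁻ s, youngConj Φ |v s| ∂μ ≤ 1) →
      ∫⁻ s, Tail k s * (‖v s‖₊ : ℝ≥0∞) ∂μ ≤ 2 * r ^ k := by
    intro k v hv hvint
    have h1 : ∀ s, Tail k s * (‖v s‖₊ : ℝ≥0∞)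
        = ∑' i, (‖D (i + k) s‖₊ : ℝ≥0∞) * (‖v s‖₊ : ℝ≥0∞) := fun s =>
      ENNReal.tsum_mul_right.symm
    calc ∫⁻ s, Tail k s * (‖v s‖₊ : ℝ≥0∞) ∂μ
        = ∑' i, ∫⁻ s, (‖D (i + k) s‖₊ : ℝ≥0∞) * (‖v s‖₊ : ℝ≥0∞) ∂μ := by
          rw [lintegral_congr (fun s => h1 s)]
          exact lintegral_tsum fun i =>
            ((hD_meas (i + k)).enorm.mul hv.enorm).aemeasurable
      _ ≤ ∑' i, r ^ (i + k) := ENNReal.tsum_le_tsum fun i =>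
          (pairing_le μ Φ (D (i + k)) hv hvint).trans (hD_norm (i + k))
      _ = (∑' i : ℕ, r ^ i) * r ^ k := by
          rw [← ENNReal.tsum_mul_right]
          congr 1
          funext i
          rw [pow_add]
      _ = 2 * r ^ k := by
          rw [ENNReal.tsum_geometric, hrdef, ENNReal.one_sub_inv_two, inv_inv]
  -- the candidate limit
  set S : G → ℝ≥0∞ := fun s => ∑' i, (‖D i s‖₊ : ℝ≥0∞) with hSdef
  have hS_meas : Measurable S := Measurable.ennreal_tsum fun i => (hD_meas i).enorm
  set C : Set G := {s | S s < ⊤} with hCdef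
  have hC_meas : MeasurableSet C := measurableSet_lt hS_meas measurable_const
  have hsummable : ∀ s ∈ C, Summable fun i => D i s := by
    intro s hs
    refine Summable.of_nnnorm ?_
    exact ENNReal.tsum_coe_ne_top_iff_summable.mp (hCdef ▸ hs).ne
  set h₁ : G → ℂ := C.indicator (fun s => ∑' i, D i s) with hh₁def
  have hh₁_meas : Measurable h₁ := by
    apply measurable_of_tendsto_metrizable' atTop
      (f := fun k => C.indicator (fun s => ∑ i ∈ Finset.range k, D i s))
    · intro k
      exact (Finset.measurable_sum _ fun i _ => hD_meas i).indicator hC_meas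
    · rw [tendsto_pi_nhds]
      intro s
      rw [hh₁def]
      by_cases hs : s ∈ C
      · simp only [Set.indicator_of_mem hs]
        exact (hsummable s hs).hasSum.tendsto_sum_nat
      · simp only [Set.indicator_of_notMem hs]
        exact tendsto_const_nhds
  set g₀ : G → ℂ := fun s => H' (m 0) s + h₁ s with hg₀def
  -- tail bound pointwise
  have htail_bound : ∀ k s, (‖H' (m k) s - g₀ s‖₊ : ℝ≥0∞) ≤ Tail k s := by
    intro k s
    by_cases hs : s ∈ C
    · have hsum := hsummable s hs
      have hsumnorm : Summable fun i => ‖D i s‖₊ :=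
        ENNReal.tsum_coe_ne_top_iff_summable.mp (hCdef ▸ hs).ne
      have hpart : ∑ i ∈ Finset.range k, D i s = H' (m k) s - H' (m 0) s :=
        Finset.sum_range_sub (fun i => H' (m i) s) k
      have hsplit : ∑ i ∈ Finset.range k, D i s + ∑' i, D (i + k) s = ∑' i, D i s :=
        hsum.sum_add_tsum_nat_add k
      have hdiff : H' (m k) s - g₀ s = -(∑' i, D (i + k) s) := by
        have hg : g₀ s = H' (m 0) s + ∑' i, D i s := by
          rw [hg₀def]
          simp only [hh₁def, Set.indicator_of_mem hs]
        rw [hg]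
        linear_combination hsplit - hpart
      rw [hdiff, nnnorm_neg]
      -- bound the norm of the tail sum
      have hsumnorm' : Summable fun i => ‖D (i + k) s‖₊ := by
        have h2 : Summable fun i => (‖D i s‖₊ : ℝ) := NNReal.summable_coe.mpr hsumnorm
        have h3 : Summable fun i => (‖D (i + k) s‖₊ : ℝ) := by
          exact_mod_cast (_root_.summable_nat_add_iff k).mpr h2
        exact NNReal.summable_coe.mp h3
      calc ((‖∑' i, D (i + k) s‖₊ : ℝ≥0∞)) ≤ ((∑' i, ‖D (i + k) s‖₊ : ℝ≥0) : ℝ≥0∞) := by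
            exact_mod_cast nnnorm_tsum_le hsumnorm'
        _ = Tail k s := ENNReal.coe_tsum hsumnorm'
    · have hTtop : Tail k s = ⊤ := by
        by_contra hne
        apply hs
        have h2 : Summable fun i => ‖D (i + k) s‖₊ :=
          ENNReal.tsum_coe_ne_top_iff_summable.mp hne
        have h3 : Summable fun i => (‖D (i + k) s‖₊ : ℝ) := NNReal.summable_coe.mpr h2
        have h4 : Summable fun i => (‖D i s‖₊ : ℝ) := (_root_.summable_nat_add_iff k).mp h3
        have h5 : Summable fun i => ‖D i s‖₊ := NNReal.summable_coe.mp h4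
        show S s < ⊤
        rw [hSdef]
        exact lt_of_le_of_lt (le_of_eq (ENNReal.coe_tsum h5).symm) (ENNReal.coe_lt_top)
      rw [hTtop]
      exact le_top
  -- norm bound on the subsequence differences
  have hNk : ∀ k, orliczNorm μ Φ (fun s => H' (m k) s - g₀ s) ≤ 2 * r ^ k := by
    intro k
    refine orliczNorm_le μ Φ _ fun v hv hvint => ?_
    calc ∫⁻ s, (‖H' (m k) s - g₀ s‖₊ : ℝ≥0∞) * (‖v s‖₊ : ℝ≥0∞) ∂μ
        ≤ ∫⁻ s, Tail k s * (‖v s‖₊ : ℝ≥0∞) ∂μ :=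
          lintegral_mono fun s => mul_le_mul_left (htail_bound k s) _
      _ ≤ 2 * r ^ k := hTail_int k v hv hvint
  -- h₁ has finite Orlicz norm
  have hNh₁ : orliczNorm μ Φ h₁ ≤ 4 := by
    calc orliczNorm μ Φ h₁
        = orliczNorm μ Φ (fun s => (H' (m 1) s - H' (m 0) s) + (-(H' (m 1) s - g₀ s))) := by
          apply orliczNorm_congr
          filter_upwards with s
          have hg : g₀ s = H' (m 0) s + h₁ s := rfl
          rw [hg]
          ring
      _ ≤ orliczNorm μ Φ (fun s => H' (m 1) s - H' (m 0) s)
          + orliczNorm μ Φ (fun s => -(H' (m 1) s - g₀ s)) :=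
          orliczNorm_add _ _ ((hH'm _).sub (hH'm _)).aemeasurable
      _ ≤ r ^ 0 + 2 * r ^ 1 := by
          gcongr
          · exact hD_norm 0
          · calc orliczNorm μ Φ (fun s => -(H' (m 1) s - g₀ s))
                = orliczNorm μ Φ (fun s => H' (m 1) s - g₀ s) := by
                  apply le_antisymm <;>
                  · apply orliczNorm_mono
                    filter_upwards with s
                    rw [norm_neg]
              _ ≤ 2 * r ^ 1 := hNk 1
      _ ≤ 4 := by
          rw [hrdef]
          norm_num
          rw [ENNReal.mul_inv_cancel] <;> norm_num
  -- h₁ is in the Orlicz space, via the key modular estimate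
  have hmemh₁ : MemOrlicz μ Φ h₁ := by
    have hw_meas : Measurable (fun s => (((8 : ℝ)⁻¹ : ℝ) : ℂ) * h₁ s) :=
      (measurable_const.mul hh₁_meas)
    have hwsupp : ∀ s, (((8 : ℝ)⁻¹ : ℝ) : ℂ) * h₁ s ≠ 0 → s ∈ ⋃ j, E j := by
      intro s hws
      have hh₁ne : h₁ s ≠ 0 := by
        intro h0
        apply hws
        rw [h0, mul_zero]
      have htsum_ne : (∑' i, D i s) ≠ 0 := by
        intro h0
        apply hh₁ne
        rw [hh₁def]
        rcases Classical.em (s ∈ C) with hs | hs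
        · rw [Set.indicator_of_mem hs, h0]
        · rw [Set.indicator_of_notMem hs]
      have hex : ∃ i, D i s ≠ 0 := by
        by_contra hall
        push_neg at hall
        exact htsum_ne (by simp [hall])
      obtain ⟨i, hi⟩ := hex
      have : H' (m (i + 1)) s ≠ 0 ∨ H' (m i) s ≠ 0 := by
        by_contra hboth
        push_neg at hboth
        apply hi
        show H' (m (i + 1)) s - H' (m i) s = 0
        rw [hboth.1, hboth.2, sub_zero]
      rcases this with h | h
      · exact hcover s _ h
      · exact hcover s _ h
    have hwnorm : orliczNorm μ Φ (fun s => (((8 : ℝ)⁻¹ : ℝ) : ℂ) * h₁ s) < 1 := by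
      calc orliczNorm μ Φ (fun s => (((8 : ℝ)⁻¹ : ℝ) : ℂ) * h₁ s)
          ≤ ENNReal.ofReal (8 : ℝ)⁻¹ * orliczNorm μ Φ h₁ :=
            orliczNorm_smul h₁ (by norm_num : (0:ℝ) ≤ (8:ℝ)⁻¹)
        _ ≤ ENNReal.ofReal (8 : ℝ)⁻¹ * 4 := mul_le_mul_right hNh₁ _
        _ < 1 := by
            rw [ENNReal.ofReal_inv_of_pos (by norm_num), ENNReal.ofReal_ofNat]
            have h84 : (8 : ℝ≥0∞)⁻¹ * 4 = 4 / 8 := by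
              rw [div_eq_mul_inv, mul_comm]
            rw [h84]
            rw [ENNReal.div_lt_iff (Or.inl (by norm_num)) (Or.inl (by norm_num))]
            norm_num
    have hmod := modular_le_one hΦ hw_meas E hE_meas hE_mono hE_fin hwsupp hwnorm
    refine ⟨hh₁_meas.aestronglyMeasurable, (8 : ℝ)⁻¹, by norm_num, ?_⟩
    have heq : ∀ s, ENNReal.ofReal (Φ ((8 : ℝ)⁻¹ * ‖h₁ s‖))
        = ENNReal.ofReal (Φ ‖(((8 : ℝ)⁻¹ : ℝ) : ℂ) * h₁ s‖) := by
      intro s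
      congr 2
      rw [norm_mul, Complex.norm_real, Real.norm_eq_abs,
        abs_of_pos (by norm_num : (0:ℝ) < 8⁻¹)]
    rw [lintegral_congr heq]
    exact lt_of_le_of_lt hmod ENNReal.one_lt_top
  have hmemg₀ : MemOrlicz μ Φ g₀ :=
    memOrlicz_add hΦ (memOrlicz_congr (hH'ae (m 0)).symm (hmem (m 0))) hmemh₁
  -- convergence
  refine ⟨g₀, hmemg₀, ?_⟩
  rw [ENNReal.tendsto_atTop_zero]
  intro ε hε
  obtain ⟨N₁, hN₁⟩ := hcau (ε / 2) (ENNReal.half_pos hε.ne')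
  have htendk : Tendsto (fun k => 2 * r ^ k) atTop (𝓝 0) := by
    have h0 : (2 : ℝ≥0∞) * 0 = 0 := by norm_num
    exact h0 ▸ ENNReal.Tendsto.const_mul
      (ENNReal.tendsto_pow_atTop_nhds_zero_of_lt_one hrlt) (Or.inr ENNReal.ofNat_ne_top)
  have hev : ∀ᶠ k in atTop, 2 * r ^ k < ε / 2 ∧ N₁ ≤ m k := by
    refine (htendk.eventually_lt_const (ENNReal.half_pos hε.ne')).and ?_
    filter_upwards [eventually_ge_atTop N₁] with k hk
    exact hk.trans (hm_ge_k k)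
  obtain ⟨k₀, hk₀⟩ := hev.exists
  refine ⟨m k₀, fun n hn => ?_⟩
  have hsplit : orliczNorm μ Φ (fun s => H n s - g₀ s)
      ≤ orliczNorm μ Φ (fun s => H n s - H (m k₀) s)
        + orliczNorm μ Φ (fun s => H (m k₀) s - g₀ s) := by
    have he : (fun s => H n s - g₀ s)
        = fun s => (H n s - H (m k₀) s) + (H (m k₀) s - g₀ s) := by
      funext s
      ring
    rw [he]
    exact orliczNorm_add _ _ ((hmem n).1.sub (hmem (m k₀)).1).aemeasurable
  have h1 : orliczNorm μ Φ (fun s => H n s - H (m k₀) s) < ε / 2 :=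
    hN₁ n (hk₀.2.trans hn) (m k₀) hk₀.2
  have h2 : orliczNorm μ Φ (fun s => H (m k₀) s - g₀ s) ≤ 2 * r ^ k₀ := by
    have he : orliczNorm μ Φ (fun s => H (m k₀) s - g₀ s)
        = orliczNorm μ Φ (fun s => H' (m k₀) s - g₀ s) := by
      apply orliczNorm_congr
      filter_upwards [hH'ae (m k₀)] with s hs
      rw [hs]
    rw [he]
    exact hNk k₀
  calc orliczNorm μ Φ (fun s => H n s - g₀ s)
      ≤ orliczNorm μ Φ (fun s => H n s - H (m k₀) s)
        + orliczNorm μ Φ (fun s => H (m k₀) s - g₀ s) := hsplit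
    _ ≤ ε / 2 + ε / 2 := add_le_add h1.le (h2.trans hk₀.1.le)
    _ = ε := ENNReal.add_halves ε

section Group
variable [Group G]
-- key pointwise intertwining lemma
lemma twConv_circle (μ : Measure G) (Ω : G × G → ℂ)
    (ω : G → ℝ) (hpos : ∀ s, 0 < ω s) (hΩω : IsCoboundaryOf Ω ω) (f g : G → ℂ) :
    LamW ω (twConv μ Ω f g) = twConv μ (circlePart Ω) (LamW ω f) (LamW ω g) := by
  funext t
  have hωc : ∀ s : G, (ω s : ℂ) ≠ 0 := fun s => by
    exact_mod_cast Complex.ofReal_ne_zero.mpr (hpos s).ne'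
  show (∫ s, f s * g (s⁻¹ * t) * Ω (s, s⁻¹ * t) ∂μ) / (ω t : ℂ) = _
  rw [twConv, ← integral_div]
  congr 1; funext s
  have hb : ‖Ω (s, s⁻¹ * t)‖ = ω (s * (s⁻¹ * t)) / (ω s * ω (s⁻¹ * t)) := hΩω s (s⁻¹ * t)
  have hst : s * (s⁻¹ * t) = t := by group
  rw [hst] at hb
  show _ = f s / (ω s : ℂ) * (g (s⁻¹ * t) / (ω (s⁻¹ * t) : ℂ)) *
      (Ω (s, s⁻¹ * t) / ((‖Ω (s, s⁻¹ * t)‖ : ℝ) : ℂ))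
  rw [hb]
  push_cast
  have h1 := hωc s; have h2 := hωc (s⁻¹ * t); have h3 := hωc t
  rw [div_mul_div_comm, div_mul_div_comm]
  congr 1
  exact (mul_div_cancel₀ _ (mul_ne_zero h1 h2)).symm

end Group

end WOT

/-- **Lemma 5.2.** For `Ω ∈ Z²_bw(G,ℂ*)` with associated weight `ω`, the weighted
Orlicz space `L^Φ_ω(G)` is a Banach space and `Λ_ω : L^Φ(G) → L^Φ_ω(G)`, `f ↦ f/ω`,
is a surjective linear isometry intertwining the twisted convolutions `⊛` (from `Ω`)
and `⊛_T` (from `Ω_T`); when `(L^Φ(G),⊛)` is a twisted Orlicz algebra this holds for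
all `f, g ∈ L^Φ(G)`, and `(L^Φ_ω(G), ⊛_T, ‖·‖_{Φ,ω})` is a Banach algebra. -/
theorem weighted_orlicz_transfer
    {G : Type*} [Group G] [TopologicalSpace G] [IsTopologicalGroup G]
    [LocallyCompactSpace G] [MeasurableSpace G] [BorelSpace G]
    (μ : Measure G) [μ.IsHaarMeasure]
    (Φ : ℝ → ℝ) (hΦ : IsYoung Φ)
    (Ω : G × G → ℂ) (hΩ : IsBddCocycle μ Ω)
    (ω : G → ℝ) (hω : IsWeight μ ω) (hΩω : IsCoboundaryOf Ω ω) :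
    -- `L^Φ_ω(G)` is a Banach space (sequential completeness in `‖·‖_{Φ,ω}`)
    (∀ F : ℕ → G → ℂ, (∀ n, MemWOrlicz μ Φ ω (F n)) →
      (∀ ε : ℝ≥0∞, 0 < ε → ∃ N : ℕ, ∀ m ≥ N, ∀ n ≥ N,
        wOrliczNorm μ Φ ω (F m - F n) < ε) →
      ∃ g : G → ℂ, MemWOrlicz μ Φ ω g ∧
        Tendsto (fun n => wOrliczNorm μ Φ ω (F n - g)) atTop (𝓝 0)) ∧
    -- `Λ_ω` is an isometry of `L^Φ(G)` into `L^Φ_ω(G)` …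
    (∀ f : G → ℂ, MemOrlicz μ Φ f →
      MemWOrlicz μ Φ ω (LamW ω f) ∧ wOrliczNorm μ Φ ω (LamW ω f) = orliczNorm μ Φ f) ∧
    -- … which is onto
    (∀ g : G → ℂ, MemWOrlicz μ Φ ω g → ∃ f : G → ℂ, MemOrlicz μ Φ f ∧ LamW ω f = g) ∧
    -- `Λ_ω` intertwines `⊛` and `⊛_T` for `f ∈ L¹(G)`, `g ∈ L^Φ(G)`
    (∀ f g : G → ℂ, MemLp f 1 μ → MemOrlicz μ Φ g →
      LamW ω (twConv μ Ω f g) = twConv μ (circlePart Ω) (LamW ω f) (LamW ω g) ∧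
      LamW ω (twConv μ Ω g f) = twConv μ (circlePart Ω) (LamW ω g) (LamW ω f)) ∧
    -- and, if `(L^Φ(G),⊛)` is a twisted Orlicz algebra, for all `f, g ∈ L^Φ(G)`,
    (IsTwistedOrliczAlgebra μ Φ Ω →
      (∀ f g : G → ℂ, MemOrlicz μ Φ f → MemOrlicz μ Φ g →
        LamW ω (twConv μ Ω f g) = twConv μ (circlePart Ω) (LamW ω f) (LamW ω g)) ∧
      ∃ C : ℝ≥0∞, 0 < C ∧ C ≠ ⊤ ∧ ∀ f g : G → ℂ,
        MemWOrlicz μ Φ ω f → MemWOrlicz μ Φ ω g →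
          MemWOrlicz μ Φ ω (twConv μ (circlePart Ω) f g) ∧
          wOrliczNorm μ Φ ω (twConv μ (circlePart Ω) f g) ≤
            C * wOrliczNorm μ Φ ω f * wOrliczNorm μ Φ ω g) := by
  have hωpos := hω.pos
  have hωc : ∀ s : G, ((ω s : ℝ) : ℂ) ≠ 0 := fun s => Complex.ofReal_ne_zero.mpr (hωpos s).ne'
  have hI : ∀ f g : G → ℂ, LamW ω (twConv μ Ω f g)
      = twConv μ (circlePart Ω) (LamW ω f) (LamW ω g) :=
    WOT.twConv_circle μ Ω ω hωpos hΩω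
  have hLam_mul : ∀ f : G → ℂ, (fun s => LamW ω f s * ((ω s : ℝ) : ℂ)) = f :=
    fun f => funext fun s => div_mul_cancel₀ _ (hωc s)
  have hmul_Lam : ∀ f : G → ℂ, LamW ω (fun s => f s * ((ω s : ℝ) : ℂ)) = f :=
    fun f => funext fun s => mul_div_cancel_right₀ _ (hωc s)
  refine ⟨?_, ?_, ?_, ?_, ?_⟩
  · -- completeness
    intro F hFmem hFcau
    set H : ℕ → G → ℂ := fun n s => F n s * ((ω s : ℝ) : ℂ) with hHdef
    have hmem : ∀ n, MemOrlicz μ Φ (H n) := hFmem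
    have hsub : ∀ m n : ℕ, wOrliczNorm μ Φ ω (F m - F n)
        = orliczNorm μ Φ (fun s => H m s - H n s) :=
      fun m n => congrArg (orliczNorm μ Φ)
        (funext fun s => sub_mul (F m s) (F n s) ((ω s : ℝ) : ℂ))
    have hcau' : ∀ ε : ℝ≥0∞, 0 < ε → ∃ N : ℕ, ∀ m ≥ N, ∀ n ≥ N,
        orliczNorm μ Φ (fun s => H m s - H n s) < ε := by
      intro ε hε
      obtain ⟨N, hN⟩ := hFcau ε hε
      exact ⟨N, fun m hm n hn => (hsub m n) ▸ hN m hm n hn⟩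
    obtain ⟨g₀, hg₀mem, hg₀tend⟩ := WOT.orlicz_complete hΦ H hmem hcau'
    refine ⟨LamW ω g₀, ?_, ?_⟩
    · show MemOrlicz μ Φ (fun s => LamW ω g₀ s * ((ω s : ℝ) : ℂ))
      rw [hLam_mul g₀]
      exact hg₀mem
    · have heq : (fun n => wOrliczNorm μ Φ ω (F n - LamW ω g₀))
          = fun n => orliczNorm μ Φ (fun s => H n s - g₀ s) := by
        funext n
        apply congrArg (orliczNorm μ Φ)
        funext s
        show (F n s - g₀ s / ((ω s : ℝ) : ℂ)) * ((ω s : ℝ) : ℂ) = F n s * ((ω s : ℝ) : ℂ) - g₀ s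
        rw [sub_mul, div_mul_cancel₀ _ (hωc s)]
      rw [heq]
      exact hg₀tend
  · -- isometry
    intro f hf
    constructor
    · show MemOrlicz μ Φ (fun s => LamW ω f s * ((ω s : ℝ) : ℂ))
      rw [hLam_mul f]
      exact hf
    · show orliczNorm μ Φ (fun s => LamW ω f s * ((ω s : ℝ) : ℂ)) = orliczNorm μ Φ f
      rw [hLam_mul f]
  · -- surjectivity
    intro g hg
    exact ⟨fun s => g s * ((ω s : ℝ) : ℂ), hg, hmul_Lam g⟩
  · -- intertwining
    intro f g _ _
    exact ⟨hI f g, hI g f⟩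
  · -- algebra case
    intro halg
    refine ⟨fun f g _ _ => hI f g, ?_⟩
    obtain ⟨Cc, hC0, hCt, hCmul⟩ := halg
    refine ⟨Cc, hC0, hCt, fun f g hf hg => ?_⟩
    have h1 := hCmul (fun s => f s * ((ω s : ℝ) : ℂ)) (fun s => g s * ((ω s : ℝ) : ℂ)) hf hg
    have hid : twConv μ (circlePart Ω) f g
        = LamW ω (twConv μ Ω (fun s => f s * ((ω s : ℝ) : ℂ))
            (fun s => g s * ((ω s : ℝ) : ℂ))) := by
      calc twConv μ (circlePart Ω) f g
          = twConv μ (circlePart Ω) (LamW ω (fun s => f s * ((ω s : ℝ) : ℂ)))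
              (LamW ω (fun s => g s * ((ω s : ℝ) : ℂ))) := by
            rw [hmul_Lam f, hmul_Lam g]
        _ = LamW ω (twConv μ Ω (fun s => f s * ((ω s : ℝ) : ℂ))
              (fun s => g s * ((ω s : ℝ) : ℂ))) := (hI _ _).symm
    constructor
    · show MemOrlicz μ Φ (fun s => twConv μ (circlePart Ω) f g s * ((ω s : ℝ) : ℂ))
      rw [hid, hLam_mul]
      exact h1.1
    · show orliczNorm μ Φ (fun s => twConv μ (circlePart Ω) f g s * ((ω s : ℝ) : ℂ)) ≤ _
      rw [hid, hLam_mul]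
      exact h1.2


end
end

section
/- Let B be a Banach *-algebra having A as a *-subalgebra such that A is a differential subalgebra of B, where either A and B are simultaneously unital with the same unit, or both are non-unital. If B is symmetric, then A is symmetric. -/
open Filter Topology ENNReal

noncomputable section

section Auxiliary

lemma aux_srad_ne_top {A' : Type*} [NormedRing A'] [NormedAlgebra ℂ A'] [NormOneClass A']
    [CompleteSpace A'] (x : A') : spectralRadius ℂ x ≠ ⊤ :=
  ((spectrum.spectralRadius_le_nnnorm (𝕜 := ℂ) x).trans_lt ENNReal.coe_lt_top).ne

lemma aux_norm_le_srad {A' : Type*} [NormedRing A'] [NormedAlgebra ℂ A'] [NormOneClass A']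
    [CompleteSpace A'] {x : A'} {μ : ℂ} (h : μ ∈ spectrum ℂ x) :
    ‖μ‖ ≤ (spectralRadius ℂ x).toReal := by
  have h1 : (‖μ‖₊ : ℝ≥0∞) ≤ spectralRadius ℂ x :=
    le_iSup₂ (f := fun (k : ℂ) (_ : k ∈ spectrum ℂ x) => (‖k‖₊ : ℝ≥0∞)) μ h
  simpa using ENNReal.toReal_mono (aux_srad_ne_top x) h1

lemma aux_srad_toReal_le {A' : Type*} [NormedRing A'] [NormedAlgebra ℂ A'] [NormOneClass A']
    [CompleteSpace A'] {u : A'} {M : ℝ} (hM : 0 ≤ M)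
    (h : ∀ lam ∈ spectrum ℂ u, ‖lam‖ ≤ M) : (spectralRadius ℂ u).toReal ≤ M := by
  have h1 : spectralRadius ℂ u ≤ ENNReal.ofReal M := by
    refine iSup₂_le fun k hk => ?_
    rw [← ENNReal.ofReal_coe_nnreal, coe_nnnorm]
    exact ENNReal.ofReal_le_ofReal (h k hk)
  exact (ENNReal.toReal_mono ENNReal.ofReal_ne_top h1).trans_eq (ENNReal.toReal_ofReal hM)

/-- For a differential (unital) Banach subalgebra, the spectral radius in the subalgebra is
dominated by the spectral radius in the big algebra. -/
lemma aux_srad_le_of_diff {A' B' : Type*} [NormedRing A'] [NormedAlgebra ℂ A']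
    [CompleteSpace A'] [NormOneClass A'] [NormedRing B'] [NormedAlgebra ℂ B']
    [CompleteSpace B'] [NormOneClass B']
    (φ : A' →ₐ[ℂ] B') {C : ℝ} (hC : 0 < C)
    (hd : ∀ x y : A', ‖x * y‖ ≤ C * (‖x‖ * ‖φ y‖ + ‖φ x‖ * ‖y‖)) (x : A') :
    spectralRadius ℂ x ≤ spectralRadius ℂ (φ x) := by
  rw [← ENNReal.toReal_le_toReal (aux_srad_ne_top x) (aux_srad_ne_top (φ x))]
  set RA := (spectralRadius ℂ x).toReal with hRA
  set RB := (spectralRadius ℂ (φ x)).toReal with hRB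
  have RA0 : 0 ≤ RA := ENNReal.toReal_nonneg
  have RB0 : 0 ≤ RB := ENNReal.toReal_nonneg
  -- real-valued Gelfand limits
  have hA : Tendsto (fun n : ℕ => ‖x ^ n‖ ^ (1 / (n : ℝ))) atTop (𝓝 RA) := by
    have := (ENNReal.tendsto_toReal (aux_srad_ne_top x)).comp
      (spectrum.pow_norm_pow_one_div_tendsto_nhds_spectralRadius x)
    convert this using 2 with n
    simp [Function.comp, ENNReal.toReal_ofReal (Real.rpow_nonneg (norm_nonneg _) _)]
  have hB : Tendsto (fun n : ℕ => ‖(φ x) ^ n‖ ^ (1 / (n : ℝ))) atTop (𝓝 RB) := by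
    have := (ENNReal.tendsto_toReal (aux_srad_ne_top (φ x))).comp
      (spectrum.pow_norm_pow_one_div_tendsto_nhds_spectralRadius (φ x))
    convert this using 2 with n
    simp [Function.comp, ENNReal.toReal_ofReal (Real.rpow_nonneg (norm_nonneg _) _)]
  -- lower bound for all m ≥ 1
  have lower : ∀ m : ℕ, 1 ≤ m → RA ^ m ≤ ‖x ^ m‖ := by
    intro m hm
    obtain ⟨n, rfl⟩ : ∃ n, m = n + 1 := ⟨m - 1, by omega⟩
    have h1 := spectrum.spectralRadius_le_pow_nnnorm_pow_one_div ℂ x n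
    rw [nnnorm_one, ENNReal.coe_one, ENNReal.one_rpow, mul_one] at h1
    have h2 : RA ≤ ‖x ^ (n + 1)‖ ^ (1 / ((n:ℝ) + 1)) := by
      have := ENNReal.toReal_mono
        (ENNReal.rpow_ne_top_of_nonneg (by positivity) ENNReal.coe_ne_top) h1
      rwa [← ENNReal.toReal_rpow, ENNReal.coe_toReal, coe_nnnorm, ← hRA] at this
    have h3 : RA ^ ((n:ℝ) + 1) ≤ (‖x ^ (n + 1)‖ ^ (1 / ((n:ℝ) + 1))) ^ ((n:ℝ) + 1) :=
      Real.rpow_le_rpow RA0 h2 (by positivity)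
    rw [← Real.rpow_mul (norm_nonneg _), one_div_mul_cancel (by positivity : ((n:ℝ)+1) ≠ 0),
      Real.rpow_one] at h3
    rw [← Real.rpow_natCast RA (n + 1)]
    push_cast
    exact h3
  -- key inequality for each ε > 0
  have key : ∀ ε : ℝ, 0 < ε → RA ^ 2 ≤ (RA + ε) * (RB + ε) := by
    intro ε hε
    by_contra hcon
    push_neg at hcon
    set P := (RA + ε) * (RB + ε) with hP
    have hPpos : 0 < P := by positivity
    set q := RA ^ 2 / P with hq
    have hq1 : 1 < q := (one_lt_div hPpos).mpr hcon
    have evq : ∀ᶠ n : ℕ in atTop, 2 * C < q ^ n :=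
      (tendsto_pow_atTop_atTop_of_one_lt hq1).eventually_gt_atTop (2 * C)
    have evA : ∀ᶠ n : ℕ in atTop, ‖x ^ n‖ ^ (1 / (n : ℝ)) ≤ RA + ε :=
      hA.eventually (eventually_le_nhds (by linarith))
    have evB : ∀ᶠ n : ℕ in atTop, ‖(φ x) ^ n‖ ^ (1 / (n : ℝ)) ≤ RB + ε :=
      hB.eventually (eventually_le_nhds (by linarith))
    obtain ⟨n, h1, h2, h3, h4⟩ := (evA.and (evB.and ((eventually_ge_atTop 1).and evq))).exists
    have hn : (0:ℝ) < n := by exact_mod_cast h3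
    have bA : ‖x ^ n‖ ≤ (RA + ε) ^ n := by
      have := Real.rpow_le_rpow (Real.rpow_nonneg (norm_nonneg _) _) h1 (Nat.cast_nonneg n)
      rwa [← Real.rpow_mul (norm_nonneg _), one_div_mul_cancel hn.ne', Real.rpow_one,
        Real.rpow_natCast] at this
    have bB : ‖(φ x) ^ n‖ ≤ (RB + ε) ^ n := by
      have := Real.rpow_le_rpow (Real.rpow_nonneg (norm_nonneg _) _) h2 (Nat.cast_nonneg n)
      rwa [← Real.rpow_mul (norm_nonneg _), one_div_mul_cancel hn.ne', Real.rpow_one,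
        Real.rpow_natCast] at this
    have c1 : RA ^ (2 * n) ≤ ‖x ^ (2 * n)‖ := lower (2 * n) (by omega)
    have c2 : ‖x ^ (2 * n)‖ ≤ 2 * C * (‖x ^ n‖ * ‖(φ x) ^ n‖) := by
      have := hd (x ^ n) (x ^ n)
      rw [← pow_add] at this
      rw [two_mul]
      calc ‖x ^ (n + n)‖ ≤ C * (‖x ^ n‖ * ‖φ (x ^ n)‖ + ‖φ (x ^ n)‖ * ‖x ^ n‖) := this
        _ = 2 * C * (‖x ^ n‖ * ‖(φ x) ^ n‖) := by rw [map_pow]; ring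
    have c3 : 2 * C * (‖x ^ n‖ * ‖(φ x) ^ n‖) ≤ 2 * C * ((RA + ε) ^ n * (RB + ε) ^ n) :=
      mul_le_mul_of_nonneg_left
        (mul_le_mul bA bB (norm_nonneg _) (by positivity)) (by linarith)
    have c4 : 2 * C * ((RA + ε) ^ n * (RB + ε) ^ n) < q ^ n * P ^ n := by
      rw [← mul_pow]
      have : (0:ℝ) < P ^ n := by positivity
      calc 2 * C * ((RA + ε) * (RB + ε)) ^ n = 2 * C * P ^ n := by rw [hP]
        _ < q ^ n * P ^ n := by nlinarith
    have c5 : q ^ n * P ^ n = RA ^ (2 * n) := by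
      rw [← mul_pow, hq, div_mul_cancel₀ _ hPpos.ne', pow_mul]
    exact lt_irrefl _ ((c1.trans (c2.trans c3)).trans_lt (c4.trans_le c5.le))
  -- let ε → 0
  have lim : Tendsto (fun ε : ℝ => (RA + ε) * (RB + ε)) (𝓝[>] 0) (𝓝 (RA * RB)) := by
    have : Tendsto (fun ε : ℝ => (RA + ε) * (RB + ε)) (𝓝 0) (𝓝 ((RA + 0) * (RB + 0))) := by
      apply Filter.Tendsto.mul <;> exact (tendsto_const_nhds.add tendsto_id)
    simpa using this.mono_left nhdsWithin_le_nhds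
  have hfin : RA ^ 2 ≤ RA * RB :=
    ge_of_tendsto lim (by filter_upwards [self_mem_nhdsWithin] with ε hε using key ε hε)
  rcases RA0.eq_or_lt with h | h
  · linarith
  · nlinarith

lemma aux_cnorm_sq (w : ℂ) : ‖w‖ ^ 2 = w.re ^ 2 + w.im ^ 2 := by
  rw [Complex.sq_norm, Complex.normSq_apply]
  ring

end Auxiliary

section Unitizations

variable {A B : Type*} [NonUnitalNormedRing A] [NonUnitalNormedRing B]
    [NormedSpace ℂ A] [IsScalarTower ℂ A A] [SMulCommClass ℂ A A]
    [NormedSpace ℂ B] [IsScalarTower ℂ B B] [SMulCommClass ℂ B B]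
    [CompleteSpace A] [CompleteSpace B]

instance aux_normOneClass : NormOneClass (WithLp 1 (Unitization ℂ A)) := by
  constructor
  rw [WithLp.unitization_norm_def]
  show ‖(1 : Unitization ℂ A).fst‖ + ‖(1 : Unitization ℂ A).snd‖ = 1
  simp

variable (ι : A →ₙₐ[ℂ] B)

/-- The unital algebra homomorphism between unitizations induced by `ι`. -/
def auxφ0 : Unitization ℂ A →ₐ[ℂ] Unitization ℂ B :=
  Unitization.lift ((Unitization.inrNonUnitalAlgHom ℂ B).comp ι)

/-- The unital algebra homomorphism between the `L¹`-unitizations induced by `ι`. -/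
def auxφ : WithLp 1 (Unitization ℂ A) →ₐ[ℂ] WithLp 1 (Unitization ℂ B) :=
  (((WithLp.unitizationAlgEquiv (𝕜 := ℂ) (A := B) ℂ).symm.toAlgHom).comp (auxφ0 ι)).comp
    (WithLp.unitizationAlgEquiv (𝕜 := ℂ) (A := A) ℂ).toAlgHom

lemma auxφ_equiv (z : WithLp 1 (Unitization ℂ A)) :
    (WithLp.equiv 1 (Unitization ℂ B)) (auxφ ι z) =
      auxφ0 ι ((WithLp.equiv 1 (Unitization ℂ A)) z) := rfl

lemma auxφ0_fst (w : Unitization ℂ A) : (auxφ0 ι w).fst = w.fst := by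
  simp [auxφ0, Unitization.lift_apply, NonUnitalAlgHom.toAlgHom_apply, Unitization.algebraMap_eq_inl]

lemma auxφ0_snd (w : Unitization ℂ A) : (auxφ0 ι w).snd = ι w.snd := by
  simp [auxφ0, Unitization.lift_apply, NonUnitalAlgHom.toAlgHom_apply, Unitization.algebraMap_eq_inl]

lemma aux_norm_φ (z : WithLp 1 (Unitization ℂ A)) : ‖auxφ ι z‖ =
    ‖((WithLp.equiv 1 (Unitization ℂ A)) z).fst‖ +
      ‖ι ((WithLp.equiv 1 (Unitization ℂ A)) z).snd‖ := by
  rw [WithLp.unitization_norm_def]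
  show ‖((WithLp.equiv 1 (Unitization ℂ B)) (auxφ ι z)).fst‖ +
    ‖((WithLp.equiv 1 (Unitization ℂ B)) (auxφ ι z)).snd‖ = _
  rw [auxφ_equiv, auxφ0_fst, auxφ0_snd]

lemma aux_spec_inr (x0 : A) :
    spectrum ℂ ((WithLp.equiv 1 (Unitization ℂ A)).symm (x0 : Unitization ℂ A))
      = quasispectrum ℂ x0 := by
  rw [Unitization.quasispectrum_eq_spectrum_inr ℂ x0,
    ← AlgEquiv.spectrum_eq (WithLp.unitizationAlgEquiv (𝕜 := ℂ) (A := A) ℂ)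
      ((WithLp.equiv 1 (Unitization ℂ A)).symm (x0 : Unitization ℂ A))]
  rfl

/-- The differential norm inequality extends to the `L¹`-unitizations. -/
lemma aux_diff_ext {C : ℝ} (hC : 0 < C)
    (hdiff : ∀ a b : A, ‖a * b‖ ≤ C * (‖a‖ * ‖ι b‖ + ‖ι a‖ * ‖b‖))
    (z w : WithLp 1 (Unitization ℂ A)) :
    ‖z * w‖ ≤ (C + 1) * (‖z‖ * ‖auxφ ι w‖ + ‖auxφ ι z‖ * ‖w‖) := by
  set Z := (WithLp.equiv 1 (Unitization ℂ A)) z with hZ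
  set W := (WithLp.equiv 1 (Unitization ℂ A)) w with hW
  have hzw : (WithLp.equiv 1 (Unitization ℂ A)) (z * w) = Z * W := rfl
  rw [WithLp.unitization_norm_def z, WithLp.unitization_norm_def w,
    WithLp.unitization_norm_def (z * w)]
  change ‖(Z * W).fst‖ + ‖(Z * W).snd‖ ≤
    (C + 1) * ((‖Z.fst‖ + ‖Z.snd‖) * ‖auxφ ι w‖ + ‖auxφ ι z‖ * (‖W.fst‖ + ‖W.snd‖))
  rw [aux_norm_φ, aux_norm_φ, ← hZ, ← hW,
    Unitization.fst_mul, Unitization.snd_mul]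
  have e1 : ‖Z.fst * W.fst‖ ≤ ‖Z.fst‖ * ‖W.fst‖ := norm_mul_le _ _
  have e2 : ‖Z.fst • W.snd + W.fst • Z.snd + Z.snd * W.snd‖ ≤
      ‖Z.fst‖ * ‖W.snd‖ + ‖W.fst‖ * ‖Z.snd‖ +
        C * (‖Z.snd‖ * ‖ι W.snd‖ + ‖ι Z.snd‖ * ‖W.snd‖) := by
    refine (norm_add₃_le).trans ?_
    gcongr
    · exact (norm_smul _ _).le
    · exact (norm_smul _ _).le
    · exact hdiff _ _
  have n1 : (0:ℝ) ≤ ‖Z.fst‖ := norm_nonneg _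
  have n2 : (0:ℝ) ≤ ‖Z.snd‖ := norm_nonneg _
  have n3 : (0:ℝ) ≤ ‖ι Z.snd‖ := norm_nonneg _
  have n4 : (0:ℝ) ≤ ‖W.fst‖ := norm_nonneg _
  have n5 : (0:ℝ) ≤ ‖W.snd‖ := norm_nonneg _
  have n6 : (0:ℝ) ≤ ‖ι W.snd‖ := norm_nonneg _
  nlinarith [mul_nonneg n1 n4, mul_nonneg n1 n5, mul_nonneg n1 n6, mul_nonneg n2 n4,
    mul_nonneg n2 n6, mul_nonneg n3 n4, mul_nonneg n3 n5, mul_nonneg n2 n5,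
    mul_nonneg (mul_nonneg hC.le n1) n4, mul_nonneg (mul_nonneg hC.le n1) n5,
    mul_nonneg (mul_nonneg hC.le n1) n6, mul_nonneg (mul_nonneg hC.le n2) n4,
    mul_nonneg (mul_nonneg hC.le n3) n4, mul_nonneg (mul_nonneg hC.le n3) n5]

end Unitizations

/-- **Lemma 5.3 (iii).** Let `B` be a Banach `*`-algebra having `A` as a `*`-subalgebra
which is a differential subalgebra of `B` (both taken in the non-unital framework,
spectra being quasi-spectra, which covers the unital-with-common-unit case as well).
If `B` is symmetric then so is `A`. -/
theorem differential_star_subalgebra_symmetric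
    {A B : Type*} [NonUnitalNormedRing A] [NonUnitalNormedRing B]
    [NormedSpace ℂ A] [IsScalarTower ℂ A A] [SMulCommClass ℂ A A]
    [NormedSpace ℂ B] [IsScalarTower ℂ B B] [SMulCommClass ℂ B B]
    [CompleteSpace A] [CompleteSpace B]
    [StarRing A] [StarRing B]
    (ι : A →ₙₐ[ℂ] B) (hinj : Function.Injective ι)
    (hstar : ∀ a : A, ι (star a) = star (ι a))
    (hcont : ∃ K : ℝ, 0 < K ∧ ∀ a : A, ‖ι a‖ ≤ K * ‖a‖)
    -- the differential norm property
    (hdiff : ∃ C : ℝ, 0 < C ∧ ∀ a b : A, ‖a * b‖ ≤ C * (‖a‖ * ‖ι b‖ + ‖ι a‖ * ‖b‖))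
    -- `B` is symmetric: `σ_B(b* b) ⊆ [0,∞)` for every `b ∈ B`
    (hBsymm : ∀ b : B, quasispectrum ℂ (star b * b) ⊆ {z : ℂ | z.im = 0 ∧ 0 ≤ z.re}) :
    -- then `A` is symmetric
    ∀ a : A, quasispectrum ℂ (star a * a) ⊆ {z : ℂ | z.im = 0 ∧ 0 ≤ z.re} := by
  obtain ⟨C, hC, hdiff⟩ := hdiff
  intro a μ hμ
  set x0 : A := star a * a with hx0
  set X : WithLp 1 (Unitization ℂ A) :=
    (WithLp.equiv 1 (Unitization ℂ A)).symm (x0 : Unitization ℂ A) with hXdef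
  have hX : μ ∈ spectrum ℂ X := by rw [aux_spec_inr]; exact hμ
  -- identify the spectrum of `auxφ ι X`
  have hφX : auxφ ι X = (WithLp.equiv 1 (Unitization ℂ B)).symm
      ((ι x0 : B) : Unitization ℂ B) := by
    apply (WithLp.equiv 1 (Unitization ℂ B)).injective
    rw [auxφ_equiv, Equiv.apply_symm_apply, Equiv.apply_symm_apply]
    apply Unitization.ext
    · rw [auxφ0_fst]; simp
    · rw [auxφ0_snd]; simp
  have hspecφX : spectrum ℂ (auxφ ι X) = quasispectrum ℂ (star (ι a) * ι a) := by
    rw [hφX, aux_spec_inr]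
    congr 1
    rw [hx0, map_mul, hstar]
  have hspec : ∀ lam ∈ spectrum ℂ (auxφ ι X), lam.im = 0 ∧ 0 ≤ lam.re := by
    rw [hspecφX]
    exact fun lam h => hBsymm (ι a) h
  set RB := (spectralRadius ℂ (auxφ ι X)).toReal with hRBdef
  have hRB0 : 0 ≤ RB := ENNReal.toReal_nonneg
  have hbound : ∀ lam ∈ spectrum ℂ (auxφ ι X), ‖lam‖ ≤ RB :=
    fun lam h => aux_norm_le_srad h
  have hrad := fun (Y : WithLp 1 (Unitization ℂ A)) =>
    aux_srad_le_of_diff (auxφ ι) (by linarith : (0:ℝ) < C + 1) (aux_diff_ext ι hC hdiff) Y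
  -- main step: shifted norm estimates transfer from `B` to `A`
  have step : ∀ (c : ℂ) (M : ℝ), 0 ≤ M →
      (∀ lam ∈ spectrum ℂ (auxφ ι X), ‖lam + c‖ ≤ M) → ‖μ + c‖ ≤ M := by
    intro c M hM hlam
    have h1 : μ + c ∈ spectrum ℂ (algebraMap ℂ (WithLp 1 (Unitization ℂ A)) c + X) :=
      spectrum.add_mem_add_iff.mpr hX
    have h2 := aux_norm_le_srad h1
    have h3 := ENNReal.toReal_mono (aux_srad_ne_top _)
      (hrad (algebraMap ℂ (WithLp 1 (Unitization ℂ A)) c + X))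
    have h4 : auxφ ι (algebraMap ℂ (WithLp 1 (Unitization ℂ A)) c + X) =
        algebraMap ℂ (WithLp 1 (Unitization ℂ B)) c + auxφ ι X := by
      rw [map_add, AlgHom.commutes]
    rw [h4] at h3
    refine h2.trans (h3.trans ?_)
    refine aux_srad_toReal_le hM ?_
    intro lam hl
    have h6 : lam - c ∈ spectrum ℂ (auxφ ι X) :=
      spectrum.add_mem_add_iff.mp (by rwa [sub_add_cancel])
    have := hlam _ h6
    rwa [sub_add_cancel] at this
  -- first: the spectrum of `X` is real
  have him : ∀ s : ℝ, μ.re ^ 2 + (μ.im + s) ^ 2 ≤ RB ^ 2 + s ^ 2 := by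
    intro s
    have hb : ∀ lam ∈ spectrum ℂ (auxφ ι X),
        ‖lam + Complex.I * (s:ℂ)‖ ≤ Real.sqrt (RB ^ 2 + s ^ 2) := by
      intro lam hl
      obtain ⟨him0, _⟩ := hspec lam hl
      have hb2 := hbound lam hl
      have hsq : ‖lam + Complex.I * (s:ℂ)‖ ^ 2 = lam.re ^ 2 + s ^ 2 := by
        rw [aux_cnorm_sq]
        simp [Complex.add_re, Complex.add_im, Complex.mul_re, Complex.mul_im, him0]
      have hre2 : lam.re ^ 2 ≤ RB ^ 2 := by
        have := aux_cnorm_sq lam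
        nlinarith [norm_nonneg lam]
      rw [show ‖lam + Complex.I * (s:ℂ)‖ =
          Real.sqrt (‖lam + Complex.I * (s:ℂ)‖ ^ 2) from (Real.sqrt_sq (norm_nonneg _)).symm]
      apply Real.sqrt_le_sqrt
      rw [hsq]
      linarith
    have hs := step (Complex.I * (s:ℂ)) (Real.sqrt (RB ^ 2 + s ^ 2)) (Real.sqrt_nonneg _) hb
    have hT : Real.sqrt (RB ^ 2 + s ^ 2) ^ 2 = RB ^ 2 + s ^ 2 :=
      Real.sq_sqrt (by positivity)
    have hnsq : ‖μ + Complex.I * (s:ℂ)‖ ^ 2 = μ.re ^ 2 + (μ.im + s) ^ 2 := by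
      rw [aux_cnorm_sq]
      simp [Complex.add_re, Complex.add_im, Complex.mul_re, Complex.mul_im]
    nlinarith [norm_nonneg (μ + Complex.I * (s:ℂ)), Real.sqrt_nonneg (RB ^ 2 + s ^ 2)]
  have him0 : μ.im = 0 := by
    by_contra h
    have hs := him ((RB ^ 2 + 1 - μ.re ^ 2 - μ.im ^ 2) / (2 * μ.im))
    have hkey : 2 * μ.im * ((RB ^ 2 + 1 - μ.re ^ 2 - μ.im ^ 2) / (2 * μ.im)) =
        RB ^ 2 + 1 - μ.re ^ 2 - μ.im ^ 2 := by field_simp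
    nlinarith [hs, hkey]
  -- second: nonnegativity
  have hre0 : 0 ≤ μ.re := by
    have hb : ∀ lam ∈ spectrum ℂ (auxφ ι X), ‖lam + (-(RB:ℂ))‖ ≤ RB := by
      intro lam hl
      obtain ⟨him1, hre1⟩ := hspec lam hl
      have hb2 := hbound lam hl
      have hre2 : lam.re ≤ RB := (Complex.re_le_norm lam).trans
        hb2
      have hsq : ‖lam + (-(RB:ℂ))‖ ^ 2 = (lam.re - RB) ^ 2 := by
        rw [aux_cnorm_sq]
        simp [Complex.add_re, Complex.add_im, him1]
        ring
      nlinarith [norm_nonneg (lam + (-(RB:ℂ)))]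
    have hs := step (-(RB:ℂ)) RB hRB0 hb
    have hnsq : ‖μ + (-(RB:ℂ))‖ ^ 2 = (μ.re - RB) ^ 2 + μ.im ^ 2 := by
      rw [aux_cnorm_sq]
      simp [Complex.add_re, Complex.add_im]
      ring
    nlinarith [norm_nonneg (μ + (-(RB:ℂ)))]
  exact ⟨him0, hre0⟩

end
end

section
/- Let G be a compactly generated locally compact group of polynomial growth with compact symmetric generating neighborhood U satisfying the strict growth estimate C₁nᵈ ≤ λ(Uⁿ) ≤ C₂nᵈ for all n ∈ ℕ, and let τ be the associated length function. Let Ψ be a Young function and l ≥ 1 such that lim_{x→0⁺} Ψ(x)/x^l exists. If β > d/l, then 1/ω_β ∈ L^Ψ(G); in particular there exists N > 0 such that ∫_G Ψ(N/(1+τ(s))^β) ds < ∞. -/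
open MeasureTheory Filter ENNReal NNReal Pointwise Topology

noncomputable section

open MeasureTheory Filter ENNReal NNReal Topology Pointwise

/-- An extended-real-valued Young function: nonzero, convex, `Ψ(0) = 0`,
`Ψ(x) → ∞` as `x → ∞`. -/
def IsYoungE (Ψ : ℝ → ℝ≥0∞) : Prop :=
  Ψ 0 = 0 ∧ (∃ x : ℝ, 0 ≤ x ∧ Ψ x ≠ 0) ∧ Tendsto Ψ atTop (𝓝 ⊤) ∧
    ∀ x ∈ Set.Ici (0 : ℝ), ∀ y ∈ Set.Ici (0 : ℝ), ∀ a b : ℝ, 0 ≤ a → 0 ≤ b →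
      a + b = 1 → Ψ (a * x + b * y) ≤ ENNReal.ofReal a * Ψ x + ENNReal.ofReal b * Ψ y

lemma real_calc (δ β l C₂ : ℝ) (d k : ℕ) (hδ : 0 ≤ δ) :
    (δ * (2:ℝ) ^ (-(β * k))) ^ l * (C₂ * ((2 ^ (k+1) : ℕ) : ℝ) ^ d)
      = (δ ^ l * (C₂ * 2 ^ d)) * ((2:ℝ) ^ ((d:ℝ) - β * l)) ^ k := by
  have h2 : (0:ℝ) < 2 := two_pos
  have e1 : ((2:ℝ) ^ (-(β * k))) ^ l = (2:ℝ) ^ (-(β * k) * l) := by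
    rw [← Real.rpow_mul h2.le]
  have e2 : ((2 ^ (k+1) : ℕ) : ℝ) ^ d = (2:ℝ) ^ (((k+1) * d : ℕ) : ℝ) := by
    rw [Real.rpow_natCast, pow_mul]
    push_cast
    ring
  have e3 : ((2:ℝ) ^ ((d:ℝ) - β * l)) ^ k = (2:ℝ) ^ (((d:ℝ) - β * l) * k) := by
    rw [← Real.rpow_natCast ((2:ℝ) ^ ((d:ℝ) - β * l)) k, ← Real.rpow_mul h2.le]
  have e4 : (2:ℝ) ^ d = (2:ℝ) ^ ((d:ℕ) : ℝ) := (Real.rpow_natCast 2 d).symm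
  rw [Real.mul_rpow hδ (Real.rpow_nonneg h2.le _), e1, e2, e3, e4]
  calc δ ^ l * 2 ^ (-(β * k) * l) * (C₂ * 2 ^ (((k+1) * d : ℕ) : ℝ))
      = δ ^ l * C₂ * ((2:ℝ) ^ (-(β * k) * l) * 2 ^ (((k+1) * d : ℕ) : ℝ)) := by ring
    _ = δ ^ l * C₂ * (2:ℝ) ^ (-(β * k) * l + ((k+1) * d : ℕ)) := by
        rw [← Real.rpow_add h2]
    _ = δ ^ l * C₂ * (2:ℝ) ^ (((d:ℕ):ℝ) + ((d:ℝ) - β * l) * k) := by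
        congr 1
        push_cast
        ring
    _ = δ ^ l * C₂ * ((2:ℝ) ^ ((d:ℕ):ℝ) * 2 ^ (((d:ℝ) - β * l) * k)) := by
        rw [Real.rpow_add h2]
    _ = δ ^ l * (C₂ * 2 ^ ((d:ℕ):ℝ)) * 2 ^ (((d:ℝ) - β * l) * k) := by ring

/-- The integral estimate in the proof of Corollary 6.3: on a compactly generated
group of strict polynomial growth `C₁ nᵈ ≤ λ(Uⁿ) ≤ C₂ nᵈ`, if `l ≥ 1` is such that
`lim_{x→0⁺} Ψ(x)/x^l` exists and `β > d/l`, then `1/ω_β ∈ L^Ψ(G)`; in particular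
`∫_G Ψ(N/(1+τ(s))^β) ds < ∞` for some `N > 0`. -/
theorem inv_polynomial_weight_mem_orlicz
    {G : Type*} [Group G] [TopologicalSpace G] [IsTopologicalGroup G]
    [LocallyCompactSpace G] [MeasurableSpace G] [BorelSpace G]
    (μ : Measure G) [μ.IsHaarMeasure]
    -- `U` is a compact symmetric generating neighbourhood with strict growth of order `d`
    (U : Set G) (hUc : IsCompact U) (hUn : U ∈ 𝓝 (1 : G)) (hUs : U⁻¹ = U)
    (hUgen : (⋃ n : ℕ, U ^ (n + 1)) = Set.univ)
    (d : ℕ) (C₁ C₂ : ℝ) (hC₁ : 0 < C₁) (hC₂ : 0 < C₂)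
    (hgrowth : ∀ n : ℕ, ENNReal.ofReal (C₁ * (n + 1 : ℕ) ^ d) ≤ μ (U ^ (n + 1)) ∧
      μ (U ^ (n + 1)) ≤ ENNReal.ofReal (C₂ * (n + 1 : ℕ) ^ d))
    -- `Ψ` is a Young function and `l ≥ 1` with `lim_{x→0⁺} Ψ(x)/x^l` existing (finite)
    (Ψ : ℝ → ℝ≥0∞) (hΨ : IsYoungE Ψ)
    (l : ℝ) (hl : 1 ≤ l)
    (hlim : ∃ L : ℝ≥0∞, L ≠ ⊤ ∧
      Tendsto (fun x : ℝ => Ψ x / ENNReal.ofReal (x ^ l)) (𝓝[>] (0 : ℝ)) (𝓝 L))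
    (β : ℝ) (hβ : β > (d : ℝ) / l) :
    -- `1/ω_β ∈ L^Ψ(G)` …
    (∃ α : ℝ, 0 < α ∧
      ∫⁻ s, Ψ (α * ((1 + lengthFn U s) ^ β)⁻¹) ∂μ < ⊤) ∧
    -- … in particular `∫ Ψ(N/(1+τ)^β) < ∞` for some `N > 0`
    ∃ N : ℝ, 0 < N ∧ ∫⁻ s, Ψ (N / (1 + lengthFn U s) ^ β) ∂μ < ⊤ := by
  have hl0 : (0:ℝ) < l := lt_of_lt_of_le one_pos hl
  have hβ0 : (0:ℝ) < β := lt_of_le_of_lt (div_nonneg (Nat.cast_nonneg d) hl0.le) hβ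
  have hdβl : (d:ℝ) < β * l := by
    have := (div_lt_iff₀ hl0).mp hβ
    linarith
  obtain ⟨L, hLtop, hL⟩ := hlim
  have hM : L + 1 ≠ ⊤ := ENNReal.add_ne_top.2 ⟨hLtop, ENNReal.one_ne_top⟩
  -- eventual bound Ψ x ≤ (L+1) * ofReal (x^l) near 0⁺
  have hev : ∀ᶠ x in 𝓝[>] (0:ℝ), Ψ x ≤ (L + 1) * ENNReal.ofReal (x ^ l) := by
    have h1 : ∀ᶠ x in 𝓝[>] (0:ℝ), Ψ x / ENNReal.ofReal (x ^ l) < L + 1 :=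
      hL.eventually_lt_const (ENNReal.lt_add_right hLtop one_ne_zero)
    filter_upwards [h1, self_mem_nhdsWithin] with x hx hx0
    have hx0' : (0:ℝ) < x := hx0
    have hne : ENNReal.ofReal (x ^ l) ≠ 0 := by
      rw [ne_eq, ENNReal.ofReal_eq_zero, not_le]
      positivity
    exact ((ENNReal.div_lt_iff (Or.inl hne) (Or.inl ENNReal.ofReal_ne_top)).mp hx).le
  obtain ⟨δ, hδ0, hsub⟩ := mem_nhdsGT_iff_exists_Ioc_subset.mp hev
  have hδpos : (0:ℝ) < δ := hδ0
  have hδ : ∀ x : ℝ, 0 < x → x ≤ δ → Ψ x ≤ (L + 1) * ENNReal.ofReal (x ^ l) :=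
    fun x h1 h2 => hsub ⟨h1, h2⟩
  have h1U : (1 : G) ∈ U := mem_of_mem_nhds hUn
  -- the dyadic covering sets and weights
  set S : ℕ → Set G := fun k => toMeasurable μ (U ^ (2 ^ (k+1))) with hS
  set w : ℕ → ℝ≥0∞ := fun k =>
    (L + 1) * ENNReal.ofReal ((δ * (2:ℝ) ^ (-(β * k))) ^ l) with hw
  have key : ∫⁻ s, Ψ (δ * ((1 + lengthFn U s) ^ β)⁻¹) ∂μ < ⊤ := by
    -- pointwise bound
    have hpt : ∀ s, Ψ (δ * ((1 + lengthFn U s) ^ β)⁻¹)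
        ≤ ∑' k, (S k).indicator (fun _ => w k) s := by
      intro s
      obtain ⟨n0, hn0⟩ : ∃ n : ℕ, s ∈ U ^ (n + 1) := by
        have : s ∈ ⋃ n : ℕ, U ^ (n + 1) := hUgen ▸ Set.mem_univ s
        simpa using this
      have hnem : {n : ℕ | s ∈ U ^ n}.Nonempty := ⟨n0 + 1, hn0⟩
      set m := sInf {n : ℕ | s ∈ U ^ n} with hm
      have hsm : s ∈ U ^ m := Nat.sInf_mem hnem
      have hτ : lengthFn U s = (m : ℝ) := rfl
      set k := Nat.log 2 (m + 1) with hk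
      have h2k : 2 ^ k ≤ m + 1 := Nat.pow_log_le_self 2 (Nat.succ_ne_zero m)
      have h2k' : m + 1 < 2 ^ (k + 1) := Nat.lt_pow_succ_log_self one_lt_two (m + 1)
      have hsS : s ∈ S k :=
        subset_toMeasurable μ _ (Set.pow_subset_pow_right h1U (le_of_lt (by omega)) hsm)
      -- Ψ value ≤ w k
      have hbpos : (0:ℝ) < (1 + (m:ℝ)) ^ β := Real.rpow_pos_of_pos (by positivity) _
      have hx0 : (0:ℝ) < δ * ((1 + (m:ℝ)) ^ β)⁻¹ := by positivity
      have hb1 : (1:ℝ) ≤ (1 + (m:ℝ)) ^ β :=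
        Real.one_le_rpow (by have h0 : (0:ℝ) ≤ (m:ℝ) := Nat.cast_nonneg m; linarith) hβ0.le
      have hxδ : δ * ((1 + (m:ℝ)) ^ β)⁻¹ ≤ δ := by
        nth_rewrite 2 [← mul_one δ]
        gcongr
        exact inv_le_one_of_one_le₀ hb1
      have hxy : δ * ((1 + (m:ℝ)) ^ β)⁻¹ ≤ δ * (2:ℝ) ^ (-(β * k)) := by
        have h2b : (2:ℝ) ^ ((k:ℕ):ℝ) ≤ 1 + (m:ℝ) := by
          rw [Real.rpow_natCast]
          have h' : ((2 ^ k : ℕ) : ℝ) ≤ ((m + 1 : ℕ) : ℝ) := Nat.cast_le.mpr h2k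
          push_cast at h'
          linarith
        have hinv : (2:ℝ) ^ (-(β * (k:ℝ))) = (((2:ℝ) ^ ((k:ℕ):ℝ)) ^ β)⁻¹ := by
          rw [← Real.rpow_mul (by norm_num : (0:ℝ) ≤ 2),
            ← Real.rpow_neg (by norm_num : (0:ℝ) ≤ 2)]
          congr 1
          ring
        rw [hinv]
        have hpos2 : (0:ℝ) < ((2:ℝ) ^ ((k:ℕ):ℝ)) ^ β :=
          Real.rpow_pos_of_pos (by positivity) _
        have hmono : ((2:ℝ) ^ ((k:ℕ):ℝ)) ^ β ≤ (1 + (m:ℝ)) ^ β :=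
          Real.rpow_le_rpow (by positivity) h2b hβ0.le
        exact mul_le_mul_of_nonneg_left (inv_anti₀ hpos2 hmono) hδpos.le
      calc Ψ (δ * ((1 + lengthFn U s) ^ β)⁻¹)
          ≤ (L + 1) * ENNReal.ofReal ((δ * ((1 + (m:ℝ)) ^ β)⁻¹) ^ l) := by
            rw [hτ]; exact hδ _ hx0 hxδ
        _ ≤ w k := by
            rw [hw]
            exact mul_le_mul_right
              (ENNReal.ofReal_le_ofReal (Real.rpow_le_rpow hx0.le hxy hl0.le)) _
        _ = (S k).indicator (fun _ => w k) s := (Set.indicator_of_mem hsS fun _ => w k).symm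
        _ ≤ ∑' j, (S j).indicator (fun _ => w j) s := ENNReal.le_tsum k
    -- integrate
    have hint : ∫⁻ s, Ψ (δ * ((1 + lengthFn U s) ^ β)⁻¹) ∂μ
        ≤ ∑' k, w k * μ (U ^ (2 ^ (k+1))) := by
      calc ∫⁻ s, Ψ (δ * ((1 + lengthFn U s) ^ β)⁻¹) ∂μ
          ≤ ∫⁻ s, ∑' k, (S k).indicator (fun _ => w k) s ∂μ := lintegral_mono hpt
        _ = ∑' k, ∫⁻ s, (S k).indicator (fun _ => w k) s ∂μ :=
            lintegral_tsum fun k =>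
              (measurable_const.indicator (measurableSet_toMeasurable μ _)).aemeasurable
        _ = ∑' k, w k * μ (S k) := by
            refine tsum_congr fun k => ?_
            rw [lintegral_indicator_const (measurableSet_toMeasurable μ _)]
        _ = ∑' k, w k * μ (U ^ (2 ^ (k+1))) := by
            refine tsum_congr fun k => ?_
            rw [hS]
            rw [measure_toMeasurable]
    -- growth bound
    have hμb : ∀ k : ℕ, μ (U ^ (2 ^ (k+1))) ≤ ENNReal.ofReal (C₂ * ((2 ^ (k+1) : ℕ) : ℝ) ^ d) := by
      intro k
      have h := (hgrowth (2 ^ (k+1) - 1)).2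
      have he : 2 ^ (k+1) - 1 + 1 = 2 ^ (k+1) := Nat.succ_pred_eq_of_pos (pow_pos (by norm_num) _)
      rwa [he] at h
    set r : ℝ≥0∞ := ENNReal.ofReal ((2:ℝ) ^ ((d:ℝ) - β * l)) with hr
    have hr1 : r < 1 := by
      rw [hr, ← ENNReal.ofReal_one]
      exact ENNReal.ofReal_lt_ofReal_iff_of_nonneg (Real.rpow_nonneg (by norm_num) _) |>.mpr
        (Real.rpow_lt_one_of_one_lt_of_neg one_lt_two (by linarith))
    set K : ℝ≥0∞ := (L + 1) * ENNReal.ofReal (δ ^ l * (C₂ * 2 ^ d)) with hK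
    have hterm : ∀ k : ℕ, w k * ENNReal.ofReal (C₂ * ((2 ^ (k+1) : ℕ) : ℝ) ^ d) ≤ K * r ^ k := by
      intro k
      rw [hw, hK, hr, mul_assoc, ← ENNReal.ofReal_mul (by positivity),
        real_calc δ β l C₂ d k hδpos.le, ← ENNReal.ofReal_pow (Real.rpow_nonneg (by norm_num) _),
        ENNReal.ofReal_mul (by positivity), mul_assoc]
    calc ∫⁻ s, Ψ (δ * ((1 + lengthFn U s) ^ β)⁻¹) ∂μ
        ≤ ∑' k, w k * μ (U ^ (2 ^ (k+1))) := hint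
      _ ≤ ∑' k, w k * ENNReal.ofReal (C₂ * ((2 ^ (k+1) : ℕ) : ℝ) ^ d) :=
          ENNReal.tsum_le_tsum fun k => mul_le_mul_right (hμb k) _
      _ ≤ ∑' k, K * r ^ k := ENNReal.tsum_le_tsum hterm
      _ = K * (1 - r)⁻¹ := by rw [ENNReal.tsum_mul_left, ENNReal.tsum_geometric]
      _ < ⊤ := by
          refine ENNReal.mul_lt_top ?_ ?_
          · exact (ENNReal.mul_lt_top hM.lt_top ENNReal.ofReal_lt_top)
          · rw [ENNReal.inv_lt_top]
            exact tsub_pos_of_lt hr1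
  refine ⟨⟨δ, hδpos, key⟩, δ, hδpos, ?_⟩
  simpa [div_eq_mul_inv] using key


end
end

section
/- Let β, γ > 0 and C > 0, and define p : [0,∞) → ℝ by p(x) = Cx/(ln(e+x))^β − γ ln(1+x). Then there exist x₀ > 0 and M > 0 such that: (i) p is positive and increasing on [x₀,∞); (ii) p′ is positive and decreasing on [x₀,∞); and (iii) for all x ≥ x₀ and y ≥ 0, 0 < p(x+y) ≤ p(x) + p(y) + M. -/
open Filter Topology Real

noncomputable section

namespace WeightAux

def L (x : ℝ) : ℝ := Real.log (Real.exp 1 + x)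

lemma hex {x : ℝ} (hx : 0 ≤ x) : 0 < Real.exp 1 + x := by positivity

lemma hL1 {x : ℝ} (hx : 0 ≤ x) : 1 ≤ L x := by
  have h := Real.log_le_log (Real.exp_pos 1) (by linarith : Real.exp 1 ≤ Real.exp 1 + x)
  rwa [Real.log_exp] at h

lemma hLpos {x : ℝ} (hx : 0 ≤ x) : 0 < L x := lt_of_lt_of_le one_pos (hL1 hx)

lemma hasDerivAt_L {x : ℝ} (hx : 0 ≤ x) :
    HasDerivAt L ((Real.exp 1 + x)⁻¹) x := by
  have h1 : HasDerivAt (fun y : ℝ => Real.exp 1 + y) 1 x := by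
    simpa using (hasDerivAt_id x).const_add (Real.exp 1)
  have h2 := (Real.hasDerivAt_log (hex hx).ne').comp x h1
  rw [mul_one] at h2
  exact h2

def g (β γ C : ℝ) (x : ℝ) : ℝ :=
  C / L x ^ β - C * β * x / ((Real.exp 1 + x) * L x ^ (β + 1)) - γ / (1 + x)

def G (β γ C : ℝ) (x : ℝ) : ℝ :=
  -(C * β) / ((Real.exp 1 + x) * L x * L x ^ β)
  - C * β * (Real.exp 1 * L x - (β + 1) * x) / ((Real.exp 1 + x) ^ 2 * L x ^ β * L x ^ 2)
  + γ / (1 + x) ^ 2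

lemma hasDerivAt_p (β γ C : ℝ) {x : ℝ} (hx : 0 < x) :
    HasDerivAt (fun x : ℝ =>
      C * x / Real.log (Real.exp 1 + x) ^ β - γ * Real.log (1 + x)) (g β γ C x) x := by
  have hx0 : (0:ℝ) ≤ x := hx.le
  have hL0 : 0 < L x := hLpos hx0
  have hA : 0 < L x ^ β := Real.rpow_pos_of_pos hL0 _
  have hE : 0 < Real.exp 1 + x := hex hx0
  have h1x : 0 < 1 + x := by linarith
  have hu : HasDerivAt (fun y : ℝ => C * y) C x := by
    simpa using (hasDerivAt_id x).const_mul C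
  have hv : HasDerivAt (fun y : ℝ => L y ^ β)
      ((Real.exp 1 + x)⁻¹ * β * L x ^ (β - 1)) x :=
    (hasDerivAt_L hx0).rpow_const (Or.inl hL0.ne')
  have hlog : HasDerivAt (fun y : ℝ => γ * Real.log (1 + y)) (γ * (1 + x)⁻¹) x := by
    have h1 : HasDerivAt (fun y : ℝ => (1:ℝ) + y) 1 x := by
      simpa using (hasDerivAt_id x).const_add (1:ℝ)
    have h2 : HasDerivAt (fun y : ℝ => Real.log (1 + y)) ((1 + x)⁻¹) x := by
      have h3 := (Real.hasDerivAt_log h1x.ne').comp x h1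
      rw [mul_one] at h3
      exact h3
    exact h2.const_mul γ
  have := ((hu.div hv hA.ne').sub hlog)
  refine this.congr_deriv (Eq.symm ?_)
  have e1 : L x ^ (β - 1) = L x ^ β / L x := by
    rw [Real.rpow_sub hL0, Real.rpow_one]
  have e2 : L x ^ (β + 1) = L x ^ β * L x := by
    rw [Real.rpow_add hL0, Real.rpow_one]
  show g β γ C x = _
  unfold g
  rw [e1, e2]
  field_simp

lemma hasDerivAt_g (β γ C : ℝ) {x : ℝ} (hx : 0 < x) :
    HasDerivAt (g β γ C) (G β γ C x) x := by
  have hx0 : (0:ℝ) ≤ x := hx.le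
  have hL0 : 0 < L x := hLpos hx0
  have hA : 0 < L x ^ β := Real.rpow_pos_of_pos hL0 _
  have hA1 : 0 < L x ^ (β + 1) := Real.rpow_pos_of_pos hL0 _
  have hE : 0 < Real.exp 1 + x := hex hx0
  have h1x : 0 < 1 + x := by linarith
  have hv : HasDerivAt (fun y : ℝ => L y ^ β)
      ((Real.exp 1 + x)⁻¹ * β * L x ^ (β - 1)) x :=
    (hasDerivAt_L hx0).rpow_const (Or.inl hL0.ne')
  have hv2 : HasDerivAt (fun y : ℝ => L y ^ (β + 1))
      ((Real.exp 1 + x)⁻¹ * (β + 1) * L x ^ (β + 1 - 1)) x :=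
    (hasDerivAt_L hx0).rpow_const (Or.inl hL0.ne')
  have hE' : HasDerivAt (fun y : ℝ => Real.exp 1 + y) 1 x := by
    simpa using (hasDerivAt_id x).const_add (Real.exp 1)
  have h1' : HasDerivAt (fun y : ℝ => (1:ℝ) + y) 1 x := by
    simpa using (hasDerivAt_id x).const_add (1:ℝ)
  have ht1 := (hasDerivAt_const x C).div hv hA.ne'
  have hw : HasDerivAt (fun y : ℝ => (Real.exp 1 + y) * L y ^ (β + 1))
      (1 * L x ^ (β + 1) + (Real.exp 1 + x) * ((Real.exp 1 + x)⁻¹ * (β + 1) * L x ^ (β + 1 - 1))) x :=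
    hE'.mul hv2
  have hnum : HasDerivAt (fun y : ℝ => C * β * y) (C * β) x := by
    simpa using (hasDerivAt_id x).const_mul (C * β)
  have ht2 := hnum.div hw (by positivity)
  have ht3 := (hasDerivAt_const x γ).div h1' h1x.ne'
  have := (ht1.sub ht2).sub ht3
  refine this.congr_deriv (Eq.symm ?_)
  have e1 : L x ^ (β - 1) = L x ^ β / L x := by
    rw [Real.rpow_sub hL0, Real.rpow_one]
  have e2 : L x ^ (β + 1) = L x ^ β * L x := by
    rw [Real.rpow_add hL0, Real.rpow_one]
  have e3 : L x ^ (β + 1 - 1) = L x ^ β := by norm_num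
  show G β γ C x = _
  unfold G
  rw [e1, e3, e2]
  field_simp
  ring

lemma g_pos (β γ C : ℝ) (hβ : 0 < β) (hC : 0 < C) {x : ℝ} (hx : 0 < x)
    (hc1 : 2 * (β + 1) ≤ L x) (hc3 : 2 * γ * L x ^ β < C * (1 + x)) :
    0 < g β γ C x := by
  have hx0 : (0:ℝ) ≤ x := hx.le
  have hL0 : 0 < L x := hLpos hx0
  have hA : 0 < L x ^ β := Real.rpow_pos_of_pos hL0 _
  have hE : 0 < Real.exp 1 + x := by positivity
  have h1x : 0 < 1 + x := by linarith
  have hxE : x ≤ Real.exp 1 + x := by linarith [Real.exp_pos 1]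
  have e2 : L x ^ (β + 1) = L x ^ β * L x := by
    rw [Real.rpow_add hL0, Real.rpow_one]
  unfold g
  rw [e2]
  have h1 : C * β * x / ((Real.exp 1 + x) * (L x ^ β * L x)) ≤ C / (2 * L x ^ β) := by
    rw [div_le_div_iff₀ (by positivity) (by positivity)]
    have key : (2 * β) * x ≤ L x * (Real.exp 1 + x) :=
      mul_le_mul (by linarith) hxE hx0 hL0.le
    nlinarith [mul_le_mul_of_nonneg_left key (by positivity : (0:ℝ) ≤ C * L x ^ β)]
  have h2 : γ / (1 + x) < C / (2 * L x ^ β) := by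
    rw [div_lt_div_iff₀ h1x (by positivity)]
    nlinarith
  have h3 : C / L x ^ β - C / (2 * L x ^ β) = C / (2 * L x ^ β) := by
    field_simp; ring
  linarith

lemma G_nonpos (β γ C : ℝ) (hβ : 0 < β) (hγ : 0 < γ) (hC : 0 < C) {x : ℝ} (hx : 0 < x)
    (hc1 : 2 * (β + 1) ≤ L x) (hc4 : 2 * γ * Real.exp 1 ^ 2 * L x ^ (β + 1) ≤ C * β * x) :
    G β γ C x ≤ 0 := by
  have hx0 : (0:ℝ) ≤ x := hx.le
  have hL0 : 0 < L x := hLpos hx0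
  have hA : 0 < L x ^ β := Real.rpow_pos_of_pos hL0 _
  have hE : 0 < Real.exp 1 + x := by positivity
  have h1x : 0 < 1 + x := by linarith
  have he1 : (1:ℝ) ≤ Real.exp 1 := by
    have := Real.add_one_le_exp 1; linarith
  have e2 : L x ^ (β + 1) = L x ^ β * L x := by
    rw [Real.rpow_add hL0, Real.rpow_one]
  rw [e2] at hc4
  unfold G
  set e := Real.exp 1 with he'
  set l := L x with hl
  set A := L x ^ β with hA'
  set E := e + x with hE'
  have hEx : x ≤ E := by rw [hE']; linarith [Real.exp_pos 1]
  have hEe : E ≤ e * (1 + x) := by rw [hE']; nlinarith [he1]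
  have he2 : (1:ℝ) ≤ e := he1
  clear_value l A E e
  clear hl hA' hE' he' he1 e2
  have comb : C * β / (E * l * A) + C * β * (e * l - (β + 1) * x) / (E ^ 2 * A * l ^ 2)
      = C * β * ((E + e) * l - (β + 1) * x) / (E ^ 2 * A * l ^ 2) := by
    field_simp; ring
  have hN : x * l / 2 ≤ (E + e) * l - (β + 1) * x := by
    have h5 : x * l ≤ (E + e) * l :=
      mul_le_mul_of_nonneg_right (by linarith) hL0.le
    have h6 : (β + 1) * x ≤ l / 2 * x :=
      mul_le_mul_of_nonneg_right (by linarith) hx0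
    nlinarith
  have step1 : γ / (1 + x) ^ 2 ≤ C * β * x / (2 * (E ^ 2 * A * l)) := by
    rw [div_le_div_iff₀ (by positivity) (by positivity)]
    have h1 : E ^ 2 ≤ e ^ 2 * (1 + x) ^ 2 := by
      nlinarith [hEe]
    nlinarith [mul_le_mul_of_nonneg_left h1 (by positivity : (0:ℝ) ≤ γ * A * l),
      mul_le_mul_of_nonneg_left hc4 (by positivity : (0:ℝ) ≤ (1 + x) ^ 2)]
  have step2 : C * β * x / (2 * (E ^ 2 * A * l)) ≤
      C * β * ((E + e) * l - (β + 1) * x) / (E ^ 2 * A * l ^ 2) := by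
    rw [div_le_div_iff₀ (by positivity) (by positivity)]
    nlinarith [mul_le_mul_of_nonneg_left hN (by positivity : (0:ℝ) ≤ C * β * (2 * (E ^ 2 * A * l)))]
  have negeq : -(C * β) / (E * l * A) = -(C * β / (E * l * A)) := by ring
  rw [negeq]
  linarith [comb, step1, step2]

lemma p_pos (β γ C : ℝ) (hγ : 0 < γ) {x : ℝ} (hx : 0 < x)
    (hc2 : γ * L x ^ (β + 1) < C * x) :
    0 < C * x / Real.log (Real.exp 1 + x) ^ β - γ * Real.log (1 + x) := by
  have hx0 : (0:ℝ) ≤ x := hx.le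
  have hL0 : 0 < L x := hLpos hx0
  have hA : 0 < L x ^ β := Real.rpow_pos_of_pos hL0 _
  have h1x : 0 < 1 + x := by linarith
  have he1 : (1:ℝ) ≤ Real.exp 1 := by
    have := Real.add_one_le_exp 1; linarith
  have hlog : Real.log (1 + x) ≤ L x := Real.log_le_log h1x (by linarith)
  have e2 : L x ^ (β + 1) = L x ^ β * L x := by
    rw [Real.rpow_add hL0, Real.rpow_one]
  rw [e2] at hc2
  have key : γ * L x < C * x / L x ^ β := by
    rw [lt_div_iff₀ hA]; nlinarith
  have : γ * Real.log (1 + x) ≤ γ * L x := by nlinarith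
  show 0 < C * x / L x ^ β - γ * Real.log (1 + x)
  linarith

lemma tendsto_L : Tendsto L atTop atTop :=
  Real.tendsto_log_atTop.comp (tendsto_atTop_add_const_left atTop (Real.exp 1) tendsto_id)

lemma eventually_K (r K : ℝ) (hK : 0 < K) : ∀ᶠ x : ℝ in atTop, K * L x ^ r ≤ x := by
  have h0 : (fun t : ℝ => Real.log t ^ r) =o[atTop] (fun t : ℝ => t ^ (1:ℝ)) :=
    isLittleO_log_rpow_rpow_atTop r one_pos
  have h1 : (fun x : ℝ => L x ^ r) =o[atTop] (fun x : ℝ => (Real.exp 1 + x) ^ (1:ℝ)) :=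
    h0.comp_tendsto (tendsto_atTop_add_const_left atTop (Real.exp 1) tendsto_id)
  have h2 := (Asymptotics.isLittleO_iff.mp h1) (show (0:ℝ) < 1/(2*K) by positivity)
  filter_upwards [h2, eventually_ge_atTop (Real.exp 1)] with x hx hxe
  have hx0 : (0:ℝ) ≤ x := le_trans (Real.exp_pos 1).le hxe
  have hLx : 0 < L x ^ r := Real.rpow_pos_of_pos (lt_of_lt_of_le one_pos (hL1 hx0)) r
  have hE : (0:ℝ) < Real.exp 1 + x := by positivity
  rw [Real.norm_eq_abs, Real.norm_eq_abs, abs_of_pos hLx, Real.rpow_one, abs_of_pos hE] at hx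
  have h3 : L x ^ r ≤ 1/(2*K) * (2*x) := le_trans hx (by
    apply mul_le_mul_of_nonneg_left (by linarith) (by positivity))
  calc K * L x ^ r ≤ K * (1/(2*K) * (2*x)) :=
        mul_le_mul_of_nonneg_left h3 hK.le
    _ = x := by field_simp

lemma concave_shift {f : ℝ → ℝ} {s : Set ℝ} (hf : ConcaveOn ℝ s f) {a b c d : ℝ}
    (ha : a ∈ s) (hb : b ∈ s) (hc : c ∈ s) (hd : d ∈ s)
    (hab : a ≤ b) (hbd : b ≤ d) (habcd : a + d = b + c) : f a + f d ≤ f b + f c := by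
  rcases eq_or_lt_of_le (hab.trans hbd) with h | h
  · have hd' : d = a := h.symm
    have hb' : b = a := le_antisymm (hd' ▸ hbd) hab
    have hc' : c = a := by linarith
    rw [hd', hb', hc']
  · have hda : d - a ≠ 0 := ne_of_gt (by linarith)
    set t : ℝ := (d - b)/(d - a) with ht
    have ht0 : 0 ≤ t := div_nonneg (by linarith) (by linarith)
    have ht1 : t ≤ 1 := (div_le_one (by linarith)).mpr (by linarith)
    have hb_eq : t * a + (1 - t) * d = b := by
      rw [ht]; field_simp; ring
    have hc_eq : (1 - t) * a + t * d = c := by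
      rw [show c = a + d - b by linarith, ht]; field_simp; ring
    have H1 := hf.2 ha hd ht0 (by linarith : (0:ℝ) ≤ 1 - t) (by ring)
    have H2 := hf.2 ha hd (by linarith : (0:ℝ) ≤ 1 - t) ht0 (by ring)
    simp only [smul_eq_mul] at H1 H2
    rw [hb_eq] at H1
    rw [hc_eq] at H2
    linarith

end WeightAux

open WeightAux in
/-- **Lemma 7.1.** For `β, γ, C > 0` let `p(x) = Cx/(ln(e+x))^β − γ ln(1+x)`. Then there
are `x₀ > 0` and `M > 0` such that (i) `p` is positive and increasing on `[x₀,∞)`,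
(ii) `p'` is positive and decreasing on `[x₀,∞)`, and (iii) `0 < p(x+y) ≤ p(x)+p(y)+M`
for all `x ≥ x₀` and `y ≥ 0`. -/
theorem subexp_minus_log_weight_function
    (β γ C : ℝ) (hβ : 0 < β) (hγ : 0 < γ) (hC : 0 < C) :
    ∃ x₀ M : ℝ, 0 < x₀ ∧ 0 < M ∧
      -- (i) `p` is positive and increasing on `[x₀, ∞)`
      (∀ x ∈ Set.Ici x₀,
        0 < C * x / Real.log (Real.exp 1 + x) ^ β - γ * Real.log (1 + x)) ∧
      MonotoneOn (fun x : ℝ =>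
        C * x / Real.log (Real.exp 1 + x) ^ β - γ * Real.log (1 + x)) (Set.Ici x₀) ∧
      -- (ii) `p'` is positive and decreasing on `[x₀, ∞)`
      (∀ x ∈ Set.Ici x₀,
        0 < deriv (fun x : ℝ =>
          C * x / Real.log (Real.exp 1 + x) ^ β - γ * Real.log (1 + x)) x) ∧
      AntitoneOn (deriv (fun x : ℝ =>
        C * x / Real.log (Real.exp 1 + x) ^ β - γ * Real.log (1 + x))) (Set.Ici x₀) ∧
      -- (iii) for all `x ≥ x₀` and `y ≥ 0`, `0 < p(x+y) ≤ p(x) + p(y) + M`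
      (∀ x ∈ Set.Ici x₀, ∀ y : ℝ, 0 ≤ y →
        (0 < C * (x + y) / Real.log (Real.exp 1 + (x + y)) ^ β -
            γ * Real.log (1 + (x + y))) ∧
        C * (x + y) / Real.log (Real.exp 1 + (x + y)) ^ β -
            γ * Real.log (1 + (x + y)) ≤
          (C * x / Real.log (Real.exp 1 + x) ^ β - γ * Real.log (1 + x)) +
          (C * y / Real.log (Real.exp 1 + y) ^ β - γ * Real.log (1 + y)) + M) := by
  set P : ℝ → ℝ := fun x : ℝ =>
    C * x / Real.log (Real.exp 1 + x) ^ β - γ * Real.log (1 + x) with hP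
  -- the eventual conditions
  have ev1 : ∀ᶠ x : ℝ in atTop, 2 * (β + 1) ≤ L x := tendsto_L.eventually_ge_atTop _
  have ev2 : ∀ᶠ x : ℝ in atTop, (γ + C)/C * L x ^ (β + 1) ≤ x :=
    eventually_K (β + 1) _ (by positivity)
  have ev3 : ∀ᶠ x : ℝ in atTop, (2*γ + C)/C * L x ^ β ≤ x :=
    eventually_K β _ (by positivity)
  have ev4 : ∀ᶠ x : ℝ in atTop, (2*γ*Real.exp 1^2)/(C*β) * L x ^ (β + 1) ≤ x :=
    eventually_K (β + 1) _ (by positivity)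
  have ev5 : ∀ᶠ x : ℝ in atTop, (1:ℝ) ≤ x := eventually_ge_atTop 1
  obtain ⟨x₀, hx₀⟩ := (((ev1.and ev2).and (ev3.and ev4)).and ev5).exists_forall_of_atTop
  obtain ⟨⟨⟨hc1₀, hc2₀⟩, hc3₀, hc4₀⟩, hx₀1⟩ := hx₀ x₀ le_rfl
  have hx₀pos : 0 < x₀ := by linarith
  -- pointwise facts on [x₀, ∞)
  have hfacts : ∀ x ∈ Set.Ici x₀, 0 < x ∧ 0 < g β γ C x ∧ G β γ C x ≤ 0 ∧ 0 < P x := by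
    intro x hx
    rw [Set.mem_Ici] at hx
    obtain ⟨⟨⟨hc1, hc2⟩, hc3, hc4⟩, hx1⟩ := hx₀ x hx
    have hxpos : 0 < x := by linarith
    have hL0 : 0 < L x := hLpos hxpos.le
    have hA : 0 < L x ^ β := Real.rpow_pos_of_pos hL0 _
    have hA1 : 0 < L x ^ (β + 1) := Real.rpow_pos_of_pos hL0 _
    rw [div_mul_eq_mul_div, div_le_iff₀ hC] at hc2 hc3
    rw [div_mul_eq_mul_div, div_le_iff₀ (by positivity : (0:ℝ) < C*β)] at hc4
    refine ⟨hxpos, ?_, ?_, ?_⟩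
    · exact g_pos β γ C hβ hC hxpos hc1 (by nlinarith)
    · exact G_nonpos β γ C hβ hγ hC hxpos hc1 (by nlinarith)
    · exact p_pos β γ C hγ hxpos (by nlinarith)
  have hder : ∀ x ∈ Set.Ici x₀, HasDerivAt P (g β γ C x) x := fun x hx =>
    hasDerivAt_p β γ C (hfacts x hx).1
  have hgder : ∀ x ∈ Set.Ici x₀, HasDerivAt (g β γ C) (G β γ C x) x := fun x hx =>
    hasDerivAt_g β γ C (hfacts x hx).1
  have hcont : ContinuousOn P (Set.Ici x₀) := fun x hx =>
    ((hder x hx).continuousAt).continuousWithinAt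
  have hdiff : DifferentiableOn ℝ P (interior (Set.Ici x₀)) := by
    rw [interior_Ici]
    exact fun x hx =>
      ((hder x (Set.Ioi_subset_Ici_self hx)).differentiableAt).differentiableWithinAt
  have hpos : ∀ x ∈ Set.Ici x₀, 0 < P x := fun x hx => (hfacts x hx).2.2.2
  have hmono : MonotoneOn P (Set.Ici x₀) := by
    apply monotoneOn_of_deriv_nonneg (convex_Ici x₀) hcont hdiff
    intro x hx
    rw [interior_Ici] at hx
    have hx' := Set.Ioi_subset_Ici_self hx
    rw [(hder x hx').deriv]
    exact (hfacts x hx').2.1.le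
  have hderpos : ∀ x ∈ Set.Ici x₀, 0 < deriv P x := by
    intro x hx
    rw [(hder x hx).deriv]
    exact (hfacts x hx).2.1
  have hganti : AntitoneOn (g β γ C) (Set.Ici x₀) := by
    apply antitoneOn_of_deriv_nonpos (convex_Ici x₀)
      (fun x hx => ((hgder x hx).continuousAt).continuousWithinAt)
    · rw [interior_Ici]
      exact fun x hx =>
        ((hgder x (Set.Ioi_subset_Ici_self hx)).differentiableAt).differentiableWithinAt
    · intro x hx
      rw [interior_Ici] at hx
      have hx' := Set.Ioi_subset_Ici_self hx
      rw [(hgder x hx').deriv]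
      exact (hfacts x hx').2.2.1
  have hderanti : AntitoneOn (deriv P) (Set.Ici x₀) := by
    intro a ha b hb hab
    rw [(hder a ha).deriv, (hder b hb).deriv]
    exact hganti ha hb hab
  have hconc : ConcaveOn ℝ (Set.Ici x₀) P := by
    apply AntitoneOn.concaveOn_of_deriv (convex_Ici x₀) hcont hdiff
    rw [interior_Ici]
    exact hderanti.mono Set.Ioi_subset_Ici_self
  -- membership helpers
  have mem0 : x₀ ∈ Set.Ici x₀ := Set.self_mem_Ici
  have mem2 : 2 * x₀ ∈ Set.Ici x₀ := by rw [Set.mem_Ici]; linarith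
  have hlogx₀ : 0 < Real.log (1 + x₀) := Real.log_pos (by linarith)
  refine ⟨x₀, P (2 * x₀) + γ * Real.log (1 + x₀), hx₀pos, ?_, hpos, hmono, hderpos,
    hderanti, ?_⟩
  · have := hpos _ mem2
    nlinarith
  · intro x hx y hy
    have hxx : x₀ ≤ x := hx
    have memx : x ∈ Set.Ici x₀ := hx
    have memxy : x + y ∈ Set.Ici x₀ := by rw [Set.mem_Ici]; linarith
    have memx0y : x₀ + y ∈ Set.Ici x₀ := by rw [Set.mem_Ici]; linarith
    have hp₀ : 0 < P x₀ := hpos _ mem0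
    have s1 : P x₀ + P (x + y) ≤ P x + P (x₀ + y) :=
      concave_shift hconc mem0 memx memx0y memxy hxx (by linarith) (by ring)
    constructor
    · exact hpos _ memxy
    · show P (x + y) ≤ P x + P y + (P (2 * x₀) + γ * Real.log (1 + x₀))
      by_cases hyx : x₀ ≤ y
      · have memy : y ∈ Set.Ici x₀ := hyx
        have s2 : P x₀ + P (x₀ + y) ≤ P (2 * x₀) + P y :=
          concave_shift hconc mem0 mem2 memy memx0y (by linarith) (by linarith) (by ring)
        have := hpos _ memy
        nlinarith
      · push_neg at hyx
        have s2 : P (x₀ + y) ≤ P (2 * x₀) := hmono memx0y mem2 (by linarith)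
        have hPy : -(γ * Real.log (1 + x₀)) ≤ P y := by
          have h1y : (0:ℝ) < 1 + y := by linarith
          have hAy : 0 < Real.log (Real.exp 1 + y) ^ β :=
            Real.rpow_pos_of_pos (hLpos hy) _
          have ht1 : 0 ≤ C * y / Real.log (Real.exp 1 + y) ^ β := by positivity
          have ht2 : Real.log (1 + y) ≤ Real.log (1 + x₀) :=
            Real.log_le_log h1y (by linarith)
          have : P y = C * y / Real.log (Real.exp 1 + y) ^ β - γ * Real.log (1 + y) := rfl
          rw [this]
          nlinarith
        linarith

end
end
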